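/- arXiv:2107.00461 — 6 statements merged into one kernel-verified Lean document; each statement's English description precedes it below -/
import Mathlib

section
/- Let B = (b_1,…,b_n) be a finite sequence of positive integers each of which equals 1 or is at least 12, and suppose at least one element is greater than 1. Let M = max_i b_i and let Σ be the sum of the elements of B that are greater than 1. Then ⟨B⟩ ≥ (1/2)·Φ^n·(M/4)^{⌊Σ/M⌋}. -/
/-- Head-recursion continuant helper. -/
def contAux : List ℕ → ℕ
  | [] => 1
  | [a] => a
  | a :: b :: l => a * contAux (b :: l) + contAux l

/-- The continuant `⟨a_1,…,a_t⟩`, satisfying `⟨⟩ = 1`, `⟨a⟩ = a` and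
`⟨a_1,…,a_t⟩ = a_t⟨a_1,…,a_{t-1}⟩ + ⟨a_1,…,a_{t-2}⟩`. -/
def cont (l : List ℕ) : ℕ := contAux l.reverse

noncomputable def Phi : ℝ := (1 + Real.sqrt 5) / 2

lemma sqrt5_sq : Real.sqrt 5 * Real.sqrt 5 = 5 := Real.mul_self_sqrt (by norm_num)

lemma Phi_pos : 0 < Phi := by
  have := Real.sqrt_nonneg 5; unfold Phi; linarith

lemma one_le_Phi : 1 ≤ Phi := by
  have h := sqrt5_sq
  have h2 := Real.sqrt_nonneg 5
  unfold Phi; nlinarith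

lemma Phi_le_two : Phi ≤ 2 := by
  have h := sqrt5_sq
  have h2 := Real.sqrt_nonneg 5
  unfold Phi; nlinarith

lemma Phi_sq : Phi * Phi = Phi + 1 := by
  have h := sqrt5_sq
  unfold Phi; ring_nf; nlinarith

lemma one_add_inv_Phi : 1 + 1/Phi = Phi := by
  have h := Phi_sq
  have h2 := Phi_pos
  field_simp
  nlinarith

lemma contAux_one_le : ∀ l : List ℕ, (∀ b ∈ l, 1 ≤ b) → 1 ≤ contAux l := by
  intro l
  induction l using contAux.induct with
  | case1 => intro _; simp [contAux]
  | case2 a => intro h; simpa [contAux] using h a (by simp)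
  | case3 a b l ih1 ih2 =>
    intro h
    have ha : 1 ≤ a := h a (by simp)
    have h1 : 1 ≤ contAux (b :: l) := ih1 (fun x hx => h x (by simp [hx]))
    simp only [contAux]
    calc 1 ≤ a * contAux (b :: l) := Nat.one_le_iff_ne_zero.mpr (by positivity)
    _ ≤ _ := Nat.le_add_right _ _

lemma contAux_tail_le : ∀ l : List ℕ, (∀ b ∈ l, 1 ≤ b) → contAux l.tail ≤ contAux l := by
  intro l
  induction l using contAux.induct with
  | case1 => simp
  | case2 a => intro h; simpa [contAux] using h a (by simp)
  | case3 a b l ih1 ih2 =>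
    intro h
    have ha : 1 ≤ a := h a (by simp)
    have h1 : 1 ≤ contAux (b :: l) := contAux_one_le _ (fun x hx => h x (by simp [hx]))
    simp only [List.tail, contAux]
    calc contAux (b :: l) = 1 * contAux (b :: l) := (one_mul _).symm
    _ ≤ a * contAux (b :: l) := Nat.mul_le_mul_right _ ha
    _ ≤ _ := Nat.le_add_right _ _

lemma log3_ge_one : (1:ℝ) ≤ Real.log 3 := by
  rw [Real.le_log_iff_exp_le (by norm_num)]
  have := Real.exp_one_lt_d9
  linarith

lemma two_log_Phi : 2 * Real.log Phi ≤ Real.log 4 := by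
  have h1 : Real.log (Phi ^ 2) ≤ Real.log 4 := by
    apply Real.log_le_log (pow_pos Phi_pos 2)
    nlinarith [Phi_le_two, Phi_pos]
  rwa [Real.log_pow, Nat.cast_ofNat] at h1

lemma E1 {M : ℝ} (hM : 12 ≤ M) :
    2 * Real.log Phi + 12 / M * Real.log (M / 4) ≤ Real.log 12 := by
  have hMpos : (0:ℝ) < M := by linarith
  have hlog3 := log3_ge_one
  have hsplit : Real.log (M / 4) = Real.log (M / 12) + Real.log 3 := by
    rw [← Real.log_mul (by positivity) (by norm_num)]
    ring_nf
  have hsub : Real.log (M / 12) ≤ M / 12 - 1 :=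
    Real.log_le_sub_one_of_pos (by positivity)
  have key1 : 12 * Real.log (M / 4) ≤ M * Real.log 3 := by
    rw [hsplit]; nlinarith
  have h12 : Real.log 12 = Real.log 4 + Real.log 3 := by
    rw [← Real.log_mul (by norm_num) (by norm_num)]; norm_num
  have h2 : 12 / M * Real.log (M / 4) ≤ Real.log 3 := by
    rw [div_mul_eq_mul_div, div_le_iff₀ hMpos]
    nlinarith
  have := two_log_Phi
  linarith

lemma E2 {M : ℝ} (hM : 12 ≤ M) :
    2 * Real.log Phi + Real.log (M / 4) ≤ Real.log M := by
  have hMpos : (0:ℝ) < M := by linarith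
  have h : Real.log (M / 4) = Real.log M - Real.log 4 := Real.log_div (by positivity) (by norm_num)
  have := two_log_Phi
  linarith

lemma point {b M : ℝ} (hb : 12 ≤ b) (hbM : b ≤ M) :
    Phi ^ 2 * (M / 4) ^ (b / M) ≤ b := by
  have hM : (12:ℝ) ≤ M := le_trans hb hbM
  have hMpos : (0:ℝ) < M := by linarith
  have hbpos : (0:ℝ) < b := by linarith
  have hM4 : (0:ℝ) < M / 4 := by linarith
  -- log inequality
  have hlog : 2 * Real.log Phi + b / M * Real.log (M / 4) ≤ Real.log b := by
    rcases eq_or_lt_of_le hM with hM12 | hM12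
    · have hb12 : b = 12 := le_antisymm (by linarith) hb
      have hbM' : b / M = 12 / M := by rw [hb12]
      rw [hbM', ← hM12, hb12]
      exact E1 le_rfl
    · obtain ⟨t, s, ht0, hs0, hts, hcomb⟩ :
          ∃ t s : ℝ, 0 ≤ t ∧ 0 ≤ s ∧ t + s = 1 ∧ t * 12 + s * M = b := by
        refine ⟨(M - b) / (M - 12), (b - 12) / (M - 12),
          div_nonneg (by linarith) (by linarith),
          div_nonneg (by linarith) (by linarith), ?_, ?_⟩
        · rw [← add_div]
          rw [show M - b + (b - 12) = M - 12 by ring, div_self (by linarith : M - 12 ≠ 0)]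
        · rw [div_mul_eq_mul_div, div_mul_eq_mul_div, ← add_div,
            div_eq_iff (by linarith : M - 12 ≠ 0)]
          ring
      have hconc : t * Real.log 12 + s * Real.log M ≤ Real.log b := by
        have := (strictConcaveOn_log_Ioi.concaveOn).2
          (Set.mem_Ioi.mpr (by norm_num : (0:ℝ) < 12))
          (Set.mem_Ioi.mpr hMpos) ht0 hs0 hts
        simpa [smul_eq_mul, hcomb] using this
      have he1 := E1 hM
      have he2 := E2 hM
      have hexp : b / M = t * (12 / M) + s * 1 := by
        rw [← hcomb, mul_one, add_div, mul_div_assoc, mul_div_assoc,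
          div_self (ne_of_gt hMpos), mul_one]
      calc 2 * Real.log Phi + b / M * Real.log (M / 4)
          = t * (2 * Real.log Phi + 12 / M * Real.log (M / 4))
            + s * (2 * Real.log Phi + Real.log (M / 4)) := by
            rw [hexp]
            have hts' : t = 1 - s := by linarith
            rw [hts']; ring
        _ ≤ t * Real.log 12 + s * Real.log M := by
            nlinarith [mul_le_mul_of_nonneg_left he1 ht0, mul_le_mul_of_nonneg_left he2 hs0]
        _ ≤ Real.log b := hconc
  -- convert to multiplicative
  have h1 : (M / 4) ^ (b / M) = Real.exp (Real.log (M / 4) * (b / M)) :=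
    Real.rpow_def_of_pos hM4 _
  have h2 : Phi ^ 2 = Real.exp (2 * Real.log Phi) := by
    have hl : Real.log (Phi ^ 2) = 2 * Real.log Phi := by
      rw [Real.log_pow]; norm_num
    rw [← hl, Real.exp_log (pow_pos Phi_pos 2)]
  rw [h1, h2, ← Real.exp_add]
  calc Real.exp (2 * Real.log Phi + Real.log (M / 4) * (b / M))
      ≤ Real.exp (Real.log b) := by
        apply Real.exp_le_exp.mpr; rw [mul_comm (Real.log (M/4))]; exact hlog
    _ = b := Real.exp_log hbpos

lemma key (M : ℕ) (hM : 12 ≤ M) :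
    ∀ C : List ℕ, (∀ b ∈ C, (b = 1 ∨ 12 ≤ b) ∧ b ≤ M) →
    Phi ^ C.length *
        ((M : ℝ) / 4) ^ ((((C.filter (fun b => 1 < b)).sum : ℕ) : ℝ) / (M : ℝ)) ≤
      (contAux C : ℝ) + (contAux C.tail : ℝ) / Phi := by
  have hMR : (12:ℝ) ≤ (M:ℝ) := by exact_mod_cast hM
  have hM4pos : (0:ℝ) < (M:ℝ)/4 := by linarith
  intro C
  induction C using contAux.induct with
  | case1 =>
    intro _
    simp only [contAux, List.filter_nil, List.sum_nil, List.length_nil, pow_zero,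
      Nat.cast_zero, zero_div, Real.rpow_zero, mul_one, List.tail_nil, Nat.cast_one]
    have := Phi_pos
    have h1 : 0 ≤ 1/Phi := by positivity
    linarith
  | case2 a =>
    intro h
    obtain ⟨ha, haM⟩ := h a (by simp)
    simp only [contAux, List.tail_cons, List.length_cons, List.length_nil, pow_one,
      Nat.cast_one]
    rcases ha with ha | ha
    · subst ha
      simp only [List.filter, decide_eq_true_eq]
      norm_num
      have := one_add_inv_Phi
      rw [one_div] at this
      linarith
    · have h1a : 1 < a := by omega
      have hfil : List.filter (fun b => decide (1 < b)) [a] = [a] := by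
        simp [List.filter, h1a]
      simp only [hfil, List.sum_cons, List.sum_nil, Nat.add_zero]
      have hpt := point (b := (a:ℝ)) (M := (M:ℝ)) (by exact_mod_cast ha) (by exact_mod_cast haM)
      have hX : (0:ℝ) ≤ ((M:ℝ)/4) ^ ((a:ℝ)/(M:ℝ)) := Real.rpow_nonneg (by linarith) _
      have h1 : 0 < 1/Phi := by have := Phi_pos; positivity
      nlinarith [Phi_pos, one_le_Phi,
        mul_nonneg (mul_nonneg (sub_nonneg.mpr one_le_Phi) Phi_pos.le) hX]
  | case3 a b l ih1 ih2 =>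
    intro h
    have hD : ∀ x ∈ b :: l, (x = 1 ∨ 12 ≤ x) ∧ x ≤ M := fun x hx => h x (by simp [hx])
    have hIH := ih1 hD
    have hone : ∀ x ∈ b :: l, 1 ≤ x := fun x hx => by rcases (hD x hx).1 with h1 | h1 <;> omega
    have hmono : (contAux l : ℝ) ≤ (contAux (b :: l) : ℝ) := by
      exact_mod_cast contAux_tail_le (b :: l) hone
    have hcd1 : (1:ℝ) ≤ (contAux (b :: l) : ℝ) := by
      exact_mod_cast contAux_one_le (b :: l) hone
    have hcl0 : (0:ℝ) ≤ (contAux l : ℝ) := by positivity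
    obtain ⟨ha, haM⟩ := h a (by simp)
    have hPhi := Phi_pos
    have ePhi : Phi * (contAux (b :: l) : ℝ)
        = (contAux (b :: l) : ℝ) + (contAux (b :: l) : ℝ) / Phi := by
      calc Phi * (contAux (b :: l) : ℝ) = (1 + 1/Phi) * (contAux (b :: l) : ℝ) := by
            rw [one_add_inv_Phi]
        _ = (contAux (b :: l) : ℝ) + (contAux (b :: l) : ℝ) / Phi := by ring
    have hSD : (contAux (b :: l) : ℝ) + (contAux l : ℝ) / Phi
        ≤ Phi * (contAux (b :: l) : ℝ) := by
      rw [ePhi]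
      have h2 : (contAux l : ℝ) / Phi ≤ (contAux (b :: l) : ℝ) / Phi := by gcongr
      linarith
    have hW := le_trans hIH hSD
    simp only [List.tail_cons] at hIH hW ⊢
    simp only [List.length_cons] at hIH hW ⊢
    rcases ha with ha | ha
    · subst ha
      have hfil : List.filter (fun x => decide (1 < x)) (1 :: b :: l)
          = List.filter (fun x => decide (1 < x)) (b :: l) := by
        simp [List.filter_cons]
      rw [hfil]
      have step := mul_le_mul_of_nonneg_left hIH hPhi.le
      have e2 : Phi * ((contAux (b :: l) : ℝ) + (contAux l : ℝ) / Phi)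
          = Phi * (contAux (b :: l) : ℝ) + (contAux l : ℝ) := by
        field_simp
      show Phi ^ (l.length + 1 + 1) *
          ((M : ℝ) / 4) ^ (((((b :: l).filter (fun x => 1 < x)).sum : ℕ) : ℝ) / (M : ℝ))
          ≤ (contAux (1 :: b :: l) : ℝ) + (contAux (b :: l) : ℝ) / Phi
      have econt : (contAux (1 :: b :: l) : ℝ) = (contAux (b :: l) : ℝ) + (contAux l : ℝ) := by
        show ((contAux (1 :: b :: l) : ℕ) : ℝ) = _
        rw [show contAux (1 :: b :: l) = 1 * contAux (b :: l) + contAux l from rfl]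
        push_cast; ring
      rw [econt]
      calc Phi ^ (l.length + 1 + 1) *
          ((M : ℝ) / 4) ^ (((((b :: l).filter (fun x => 1 < x)).sum : ℕ) : ℝ) / (M : ℝ))
          = Phi * (Phi ^ (l.length + 1) *
            ((M : ℝ) / 4) ^ (((((b :: l).filter (fun x => 1 < x)).sum : ℕ) : ℝ) / (M : ℝ))) := by
            ring
        _ ≤ Phi * ((contAux (b :: l) : ℝ) + (contAux l : ℝ) / Phi) := step
        _ = Phi * (contAux (b :: l) : ℝ) + (contAux l : ℝ) := e2
        _ = (contAux (b :: l) : ℝ) + (contAux l : ℝ) + (contAux (b :: l) : ℝ) / Phi := by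
            rw [ePhi]; ring
    · -- 12 ≤ a
      have h1a : 1 < a := by omega
      have hfil : List.filter (fun x => decide (1 < x)) (a :: b :: l)
          = a :: List.filter (fun x => decide (1 < x)) (b :: l) := by
        simp [List.filter_cons, h1a]
      rw [hfil]
      have haR : (12:ℝ) ≤ (a:ℝ) := by exact_mod_cast ha
      have haMR : (a:ℝ) ≤ (M:ℝ) := by exact_mod_cast haM
      have hpt := point haR haMR
      have econt : (contAux (a :: b :: l) : ℝ)
          = (a:ℝ) * (contAux (b :: l) : ℝ) + (contAux l : ℝ) := by
        rw [show contAux (a :: b :: l) = a * contAux (b :: l) + contAux l from rfl]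
        push_cast; ring
      rw [econt, List.sum_cons]
      have esum : (((a + ((b :: l).filter (fun x => 1 < x)).sum : ℕ) : ℝ) / (M:ℝ))
          = (a:ℝ)/(M:ℝ) + ((((b :: l).filter (fun x => 1 < x)).sum : ℕ) : ℝ)/(M:ℝ) := by
        push_cast; rw [add_div]
      rw [esum, Real.rpow_add hM4pos]
      have hXa : (0:ℝ) ≤ ((M:ℝ)/4) ^ ((a:ℝ)/(M:ℝ)) := Real.rpow_nonneg (by linarith) _
      have hcd0 : (0:ℝ) ≤ (contAux (b :: l) : ℝ) := by linarith
      have hdiv0 : (0:ℝ) ≤ (contAux (b :: l) : ℝ) / Phi := by positivity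
      calc Phi ^ (l.length + 1 + 1) *
          (((M:ℝ)/4) ^ ((a:ℝ)/(M:ℝ)) *
            ((M:ℝ)/4) ^ (((((b :: l).filter (fun x => 1 < x)).sum : ℕ) : ℝ)/(M:ℝ)))
          = (Phi * ((M:ℝ)/4) ^ ((a:ℝ)/(M:ℝ))) * (Phi ^ (l.length + 1) *
            ((M:ℝ)/4) ^ (((((b :: l).filter (fun x => 1 < x)).sum : ℕ) : ℝ)/(M:ℝ))) := by
            ring
        _ ≤ (Phi * ((M:ℝ)/4) ^ ((a:ℝ)/(M:ℝ))) * (Phi * (contAux (b :: l) : ℝ)) :=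
            mul_le_mul_of_nonneg_left hW (mul_nonneg hPhi.le hXa)
        _ = (Phi ^ 2 * ((M:ℝ)/4) ^ ((a:ℝ)/(M:ℝ))) * (contAux (b :: l) : ℝ) := by ring
        _ ≤ (a:ℝ) * (contAux (b :: l) : ℝ) := mul_le_mul_of_nonneg_right hpt hcd0
        _ ≤ (a:ℝ) * (contAux (b :: l) : ℝ) + (contAux l : ℝ) + (contAux (b :: l) : ℝ) / Phi := by
            linarith

/-- If every element of `B` equals `1` or is at least `12`, some element exceeds `1`,
`M` is the largest element and `Σ` is the sum of the elements greater than `1`, then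
`⟨B⟩ ≥ (1/2) Φ^n (M/4)^⌊Σ/M⌋`. -/
theorem stmt13 (B : List ℕ) (hsize : ∀ b ∈ B, b = 1 ∨ 12 ≤ b) (hex : ∃ b ∈ B, 1 < b)
    (M : ℕ) (hMmem : M ∈ B) (hMmax : ∀ b ∈ B, b ≤ M) :
    (cont B : ℝ) ≥
      1 / 2 * Phi ^ B.length *
        ((M : ℝ) / 4) ^ ((B.filter (fun b => 1 < b)).sum / M) := by
  -- M ≥ 12
  obtain ⟨b0, hb0B, hb0⟩ := hex
  have hM : 12 ≤ M := by
    rcases hsize b0 hb0B with h | h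
    · omega
    · exact le_trans h (hMmax b0 hb0B)
  have hMR : (12:ℝ) ≤ (M:ℝ) := by exact_mod_cast hM
  have hM4 : (1:ℝ) ≤ (M:ℝ)/4 := by linarith
  have hPhi := Phi_pos
  set C := B.reverse with hC
  have hCmem : ∀ b ∈ C, (b = 1 ∨ 12 ≤ b) ∧ b ≤ M := by
    intro b hb
    rw [hC, List.mem_reverse] at hb
    exact ⟨hsize b hb, hMmax b hb⟩
  have hkey := key M hM C hCmem
  -- rewrite reversal facts
  have hlen : C.length = B.length := by rw [hC, List.length_reverse]
  have hsum : (C.filter (fun b => 1 < b)).sum = (B.filter (fun b => 1 < b)).sum := by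
    rw [hC, List.filter_reverse, List.sum_reverse]
  have hcont : contAux C = cont B := rfl
  rw [hlen, hsum, hcont] at hkey
  -- entries of C ≥ 1
  have honeC : ∀ b ∈ C, 1 ≤ b := by
    intro b hb; rcases (hCmem b hb).1 with h | h <;> omega
  have htail : (contAux C.tail : ℝ) ≤ (cont B : ℝ) := by
    rw [← hcont]; exact_mod_cast contAux_tail_le C honeC
  have hcont1 : (1:ℝ) ≤ (cont B : ℝ) := by
    rw [← hcont]; exact_mod_cast contAux_one_le C honeC
  have hS : (cont B : ℝ) + (contAux C.tail : ℝ) / Phi ≤ Phi * (cont B : ℝ) := by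
    have e : Phi * (cont B : ℝ) = (cont B : ℝ) + (cont B : ℝ) / Phi := by
      calc Phi * (cont B : ℝ) = (1 + 1/Phi) * (cont B : ℝ) := by rw [one_add_inv_Phi]
        _ = (cont B : ℝ) + (cont B : ℝ) / Phi := by ring
    rw [e]
    have : (contAux C.tail : ℝ) / Phi ≤ (cont B : ℝ) / Phi := by gcongr
    linarith
  have hmain : Phi ^ B.length *
      ((M : ℝ) / 4) ^ ((((B.filter (fun b => 1 < b)).sum : ℕ) : ℝ) / (M : ℝ))
      ≤ Phi * (cont B : ℝ) := le_trans hkey hS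
  -- exponent comparison
  set k : ℕ := (B.filter (fun b => 1 < b)).sum / M with hk
  have hexp : ((M : ℝ)/4) ^ k ≤
      ((M : ℝ) / 4) ^ ((((B.filter (fun b => 1 < b)).sum : ℕ) : ℝ) / (M : ℝ)) := by
    rw [← Real.rpow_natCast ((M:ℝ)/4) k]
    apply Real.rpow_le_rpow_of_exponent_le hM4
    rw [hk]; exact Nat.cast_div_le
  have hpow0 : (0:ℝ) ≤ Phi ^ B.length := by positivity
  have hk0 : (0:ℝ) ≤ ((M:ℝ)/4) ^ k := by positivity
  rw [ge_iff_le]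
  calc 1 / 2 * Phi ^ B.length * ((M : ℝ) / 4) ^ k
      = 1 / 2 * (Phi ^ B.length * ((M : ℝ) / 4) ^ k) := by ring
    _ ≤ 1 / 2 * (Phi ^ B.length *
        ((M : ℝ) / 4) ^ ((((B.filter (fun b => 1 < b)).sum : ℕ) : ℝ) / (M : ℝ))) := by
        have := mul_le_mul_of_nonneg_left hexp hpow0
        linarith
    _ ≤ 1 / 2 * (Phi * (cont B : ℝ)) := by linarith
    _ ≤ (cont B : ℝ) := by nlinarith [Phi_le_two, hcont1]
end

section
/- Let λ ∈ (0,1), η > 0, ε > 0, and let N, M, i be positive integers with i + M ≤ N. Let c_1,…,c_N be positive reals and set φ_i = (1−λ)·Σ_{k=i+1}^{N} (√λ)^{k−i}/c_k + η·c_i. If c_{i+j} < (1+ε²)·c_i for all 1 ≤ j ≤ M, then φ_i > 2·√( η·√λ·(1+√λ)·(1−(√λ)^M)/(1+ε²) ). -/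
lemma amgm_aux (x y : ℝ) (hx : 0 ≤ x) (hy : 0 ≤ y) :
    2 * Real.sqrt (x * y) ≤ x + y := by
  rw [Real.sqrt_mul hx y]
  nlinarith [Real.sq_sqrt hx, Real.sq_sqrt hy, Real.sqrt_nonneg x, Real.sqrt_nonneg y,
    sq_nonneg (Real.sqrt x - Real.sqrt y)]

/-- If `c_{i+j} < (1+ε²) c_i` for `1 ≤ j ≤ M`, then
`φ_i = (1-λ) Σ_{k=i+1}^{N} (√λ)^{k-i}/c_k + η c_i > 2 √(η √λ (1+√λ)(1-(√λ)^M)/(1+ε²))`. -/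
theorem stmt15 (lam η ε : ℝ) (hlam : lam ∈ Set.Ioo (0:ℝ) 1) (hη : 0 < η) (hε : 0 < ε)
    (N M i : ℕ) (hi : 1 ≤ i) (hM : 1 ≤ M) (hiMN : i + M ≤ N)
    (c : ℕ → ℝ) (hc : ∀ k, 1 ≤ k → k ≤ N → 0 < c k)
    (hsmall : ∀ j, 1 ≤ j → j ≤ M → c (i + j) < (1 + ε ^ 2) * c i) :
    (1 - lam) * ∑ k ∈ Finset.Icc (i + 1) N, (Real.sqrt lam) ^ (k - i) / c k + η * c i >
      2 * Real.sqrt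
          (η * Real.sqrt lam * (1 + Real.sqrt lam) * (1 - (Real.sqrt lam) ^ M) / (1 + ε ^ 2)) := by
  set s := Real.sqrt lam with hs
  have hs0 : 0 < s := Real.sqrt_pos.mpr hlam.1
  have hs1 : s < 1 := by
    rw [hs, show (1:ℝ) = Real.sqrt 1 by simp]
    exact Real.sqrt_lt_sqrt hlam.1.le hlam.2
  have hss : s * s = lam := Real.mul_self_sqrt hlam.1.le
  have hε2 : (0:ℝ) < 1 + ε ^ 2 := by positivity
  have hci : 0 < c i := hc i hi (le_trans (by omega) hiMN)
  have hsM : s ^ M < 1 := pow_lt_one₀ hs0.le hs1 (by omega)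
  -- the sum over [i+1, N] is at least the sum over [i+1, i+M]
  have hsub : ∑ k ∈ Finset.Icc (i + 1) (i + M), s ^ (k - i) / c k ≤
      ∑ k ∈ Finset.Icc (i + 1) N, s ^ (k - i) / c k := by
    apply Finset.sum_le_sum_of_subset_of_nonneg
    · exact Finset.Icc_subset_Icc_right hiMN
    · intro k hk _
      have hk' := Finset.mem_Icc.mp hk
      have : 0 < c k := hc k (by omega) hk'.2
      positivity
  -- reindex
  have hreind : ∑ k ∈ Finset.Icc (i + 1) (i + M), s ^ (k - i) / c k =
      ∑ j ∈ Finset.Icc 1 M, s ^ j / c (i + j) := by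
    apply Finset.sum_nbij' (fun k => k - i) (fun j => i + j)
    · intro k hk; have := Finset.mem_Icc.mp hk; simp [Finset.mem_Icc]; omega
    · intro j hj; have := Finset.mem_Icc.mp hj; simp [Finset.mem_Icc]; omega
    · intro k hk; have := Finset.mem_Icc.mp hk; omega
    · intro j hj; have := Finset.mem_Icc.mp hj; omega
    · intro k hk; have := Finset.mem_Icc.mp hk
      have : i + (k - i) = k := by omega
      rw [this]
  -- strict termwise lower bound
  have hstrict : ∑ j ∈ Finset.Icc 1 M, s ^ j / ((1 + ε ^ 2) * c i) <
      ∑ j ∈ Finset.Icc 1 M, s ^ j / c (i + j) := by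
    apply Finset.sum_lt_sum_of_nonempty
    · exact Finset.nonempty_Icc.mpr hM
    · intro j hj
      have hj' := Finset.mem_Icc.mp hj
      have hcij : 0 < c (i + j) := hc (i + j) (by omega) (by omega)
      exact div_lt_div_of_pos_left (by positivity) hcij (hsmall j hj'.1 hj'.2)
  -- geometric sum
  have hgeom : ∑ j ∈ Finset.Icc 1 M, s ^ j = s * ((1 - s ^ M) / (1 - s)) := by
    have h1 : ∑ j ∈ Finset.Icc 1 M, s ^ j = ∑ j ∈ Finset.range M, s ^ (1 + j) := by
      rw [← Finset.Ico_add_one_right_eq_Icc, Finset.sum_Ico_eq_sum_range]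
      simp
    have h2 : ∑ j ∈ Finset.range M, s ^ j = (1 - s ^ M) / (1 - s) := by
      rw [geom_sum_eq (ne_of_lt hs1)]
      rw [div_eq_div_iff (by linarith) (by linarith)]
      ring
    rw [h1]
    calc ∑ j ∈ Finset.range M, s ^ (1 + j) = s * ∑ j ∈ Finset.range M, s ^ j := by
          rw [Finset.mul_sum]; exact Finset.sum_congr rfl fun j _ => by ring
      _ = s * ((1 - s ^ M) / (1 - s)) := by rw [h2]
  have hT : 0 ≤ s * (1 + s) * (1 - s ^ M) / (1 + ε ^ 2) := by
    have : 0 ≤ 1 - s ^ M := by linarith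
    positivity
  -- the key lower bound for the sum part
  have hkey : s * (1 + s) * (1 - s ^ M) / (1 + ε ^ 2) / c i <
      (1 - lam) * ∑ k ∈ Finset.Icc (i + 1) N, s ^ (k - i) / c k := by
    have h1lam : 0 < 1 - lam := by linarith [hlam.2]
    have hsum : ∑ j ∈ Finset.Icc 1 M, s ^ j / ((1 + ε ^ 2) * c i) =
        s * ((1 - s ^ M) / (1 - s)) / ((1 + ε ^ 2) * c i) := by
      rw [← Finset.sum_div, hgeom]
    have hchain : s * ((1 - s ^ M) / (1 - s)) / ((1 + ε ^ 2) * c i) <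
        ∑ k ∈ Finset.Icc (i + 1) N, s ^ (k - i) / c k := by
      rw [← hsum]
      calc _ < ∑ j ∈ Finset.Icc 1 M, s ^ j / c (i + j) := hstrict
        _ = ∑ k ∈ Finset.Icc (i + 1) (i + M), s ^ (k - i) / c k := hreind.symm
        _ ≤ _ := hsub
    have heq : (1 - lam) * (s * ((1 - s ^ M) / (1 - s)) / ((1 + ε ^ 2) * c i)) =
        s * (1 + s) * (1 - s ^ M) / (1 + ε ^ 2) / c i := by
      have h1s : (1:ℝ) - s ≠ 0 := by linarith
      have : 1 - lam = (1 - s) * (1 + s) := by rw [← hss]; ring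
      rw [this]
      field_simp
    calc s * (1 + s) * (1 - s ^ M) / (1 + ε ^ 2) / c i
        = (1 - lam) * (s * ((1 - s ^ M) / (1 - s)) / ((1 + ε ^ 2) * c i)) := heq.symm
      _ < _ := by exact mul_lt_mul_of_pos_left hchain h1lam
  -- finish with AM-GM
  have hfinal : 2 * Real.sqrt (η * s * (1 + s) * (1 - s ^ M) / (1 + ε ^ 2)) ≤
      s * (1 + s) * (1 - s ^ M) / (1 + ε ^ 2) / c i + η * c i := by
    have harg : η * s * (1 + s) * (1 - s ^ M) / (1 + ε ^ 2) =
        (s * (1 + s) * (1 - s ^ M) / (1 + ε ^ 2) / c i) * (η * c i) := by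
      field_simp
    rw [harg]
    exact amgm_aux _ _ (by positivity) (by positivity)
  linarith
end

section
/- For every η > 0 and every δ > 0 there exists λ₀ ∈ (0,1) such that for every λ ∈ (λ₀,1) there exists N₀ ∈ ℕ such that for every integer N ≥ N₀ and all positive reals c_1,…,c_N one has max_{1 ≤ i ≤ N} [ (1−λ)·Σ_{k=i+1}^{N} (√λ)^{k−i}/c_k + η·c_i ] ≥ √(8η) − δ. -/
/-- Key one-step inequality: if `t ∈ [0,B)` and `B²/4 < s(1+s)η`, then
`s((1-s²)η/(B-t) + t) ≥ t + (1-s)(s(1+s)η - B²/4)/B`. -/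
lemma step_ineq (s η B t : ℝ) (hs0 : 0 < s) (hs1 : s < 1) (hη : 0 < η)
    (hB : 0 < B) (ht0 : 0 ≤ t) (htB : t < B)
    (hG : B ^ 2 / 4 < s * (1 + s) * η) :
    t + (1 - s) * (s * (1 + s) * η - B ^ 2 / 4) / B ≤
      s * ((1 - s ^ 2) * η / (B - t) + t) := by
  have hu : 0 < B - t := by linarith
  have h1 : t * (B - t) ≤ B ^ 2 / 4 := by nlinarith [sq_nonneg (t - B / 2)]
  have heq : s * ((1 - s ^ 2) * η / (B - t) + t) =
      t + (1 - s) * (s * (1 + s) * η - t * (B - t)) / (B - t) := by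
    field_simp
    ring
  rw [heq]
  have h2 : (1 - s) * (s * (1 + s) * η - B ^ 2 / 4) / B ≤
      (1 - s) * (s * (1 + s) * η - t * (B - t)) / (B - t) := by
    apply div_le_div₀ (by nlinarith) (by nlinarith) hu (by linarith)
  linarith

set_option maxHeartbeats 800000 in
/-- For every `η > 0` and `δ > 0` there is `λ₀ ∈ (0,1)` such that for every `λ ∈ (λ₀,1)`
there is `N₀` such that for every `N ≥ N₀` and all positive `c_1,…,c_N`,
`max_{1 ≤ i ≤ N} [(1-λ) Σ_{k=i+1}^{N} (√λ)^{k-i}/c_k + η c_i] ≥ √(8η) - δ`. -/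
theorem stmt16 (η δ : ℝ) (hη : 0 < η) (hδ : 0 < δ) :
    ∃ lam0 ∈ Set.Ioo (0:ℝ) 1, ∀ lam ∈ Set.Ioo lam0 1, ∃ N0 : ℕ, ∀ N : ℕ, N0 ≤ N →
      ∀ c : ℕ → ℝ, (∀ k, 1 ≤ k → k ≤ N → 0 < c k) →
        ∃ i : ℕ, 1 ≤ i ∧ i ≤ N ∧
          (1 - lam) * ∑ k ∈ Finset.Icc (i + 1) N, (Real.sqrt lam) ^ (k - i) / c k + η * c i ≥
            Real.sqrt (8 * η) - δ := by
  set B : ℝ := Real.sqrt (8 * η) - δ with hBdef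
  by_cases hBpos : B ≤ 0
  · -- trivial case: the quantity is nonnegative
    refine ⟨1/2, ⟨by norm_num, by norm_num⟩, ?_⟩
    intro lam hlam
    refine ⟨1, ?_⟩
    intro N hN c hc
    refine ⟨1, le_rfl, hN, ?_⟩
    have hsum : 0 ≤ ∑ k ∈ Finset.Icc (1 + 1) N, (Real.sqrt lam) ^ (k - 1) / c k := by
      apply Finset.sum_nonneg
      intro k hk
      simp only [Finset.mem_Icc] at hk
      exact div_nonneg (pow_nonneg (Real.sqrt_nonneg _) _) (hc k (by omega) hk.2).le
    have h1 : 0 ≤ (1 - lam) * ∑ k ∈ Finset.Icc (1 + 1) N, (Real.sqrt lam) ^ (k - 1) / c k :=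
      mul_nonneg (by linarith [hlam.2]) hsum
    have h2 : 0 < η * c 1 := mul_pos hη (hc 1 le_rfl hN)
    linarith
  push_neg at hBpos
  have h8η : (0:ℝ) ≤ 8 * η := by linarith
  have hB8 : B ^ 2 < 8 * η := by
    nlinarith [Real.sq_sqrt h8η, Real.sqrt_nonneg (8 * η)]
  refine ⟨max (B ^ 2 / (8 * η)) (1/2),
    ⟨lt_of_lt_of_le (by norm_num) (le_max_right _ _),
     max_lt ((div_lt_one (by linarith)).mpr hB8) (by norm_num)⟩, ?_⟩
  intro lam hlam
  obtain ⟨hl0, hl1⟩ := hlam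
  have hlamB : B ^ 2 / (8 * η) < lam := lt_of_le_of_lt (le_max_left _ _) hl0
  have hlam_half : (1:ℝ)/2 < lam := lt_of_le_of_lt (le_max_right _ _) hl0
  have hlam_pos : 0 < lam := by linarith
  set s : ℝ := Real.sqrt lam with hsdef
  have hs0 : 0 < s := Real.sqrt_pos.mpr hlam_pos
  have hs2 : s ^ 2 = lam := Real.sq_sqrt hlam_pos.le
  have hs1 : s < 1 := by nlinarith
  have hsl : lam ≤ s := by nlinarith
  have hG : B ^ 2 / 4 < s * (1 + s) * η := by
    have h1 : B ^ 2 / 4 < 2 * η * lam := by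
      rw [div_lt_iff₀ (by linarith : (0:ℝ) < 8 * η)] at hlamB
      nlinarith
    nlinarith
  set ε : ℝ := (1 - s) * (s * (1 + s) * η - B ^ 2 / 4) / B with hεdef
  have hε : 0 < ε :=
    div_pos (mul_pos (by linarith) (by linarith)) hBpos
  refine ⟨⌈B / ε⌉₊ + 2, ?_⟩
  intro N hN c hc
  by_contra hcon
  push_neg at hcon
  set x : ℕ → ℝ := fun i => (1 - lam) * ∑ k ∈ Finset.Icc (i + 1) N, s ^ (k - i) / c k with hxdef
  have hx_nonneg : ∀ i, 0 ≤ x i := by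
    intro i
    apply mul_nonneg (by linarith)
    apply Finset.sum_nonneg
    intro k hk
    simp only [Finset.mem_Icc] at hk
    exact div_nonneg (pow_nonneg hs0.le _) (hc k (by omega) hk.2).le
  have hxN : x N = 0 := by
    have h : Finset.Icc (N + 1) N = ∅ := Finset.Icc_eq_empty (by omega)
    simp [hxdef, h]
  have hx_lt : ∀ i, 1 ≤ i → i ≤ N → x i + η * c i < B := by
    intro i h1 h2
    exact hcon i h1 h2
  have key : ∀ i, 1 ≤ i → i + 1 ≤ N → x (i + 1) + ε ≤ x i := by
    intro i h1 h2
    have hc1 : 0 < c (i + 1) := hc (i + 1) (by omega) h2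
    have hφ := hx_lt (i + 1) (by omega) h2
    have hxi1B : x (i + 1) < B := by nlinarith [mul_pos hη hc1]
    -- recursion: x i = s * ((1-lam)/c (i+1) + x (i+1))
    have hrec : x i = s * ((1 - lam) / c (i + 1) + x (i + 1)) := by
      have hsplit : Finset.Icc (i + 1) N = insert (i + 1) (Finset.Icc (i + 2) N) := by
        ext k
        simp only [Finset.mem_Icc, Finset.mem_insert]
        omega
      have hnot : (i + 1) ∉ Finset.Icc (i + 2) N := by
        simp only [Finset.mem_Icc]; omega
      have hterm : s ^ (i + 1 - i) / c (i + 1) = s / c (i + 1) := by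
        have : i + 1 - i = 1 := by omega
        rw [this, pow_one]
      have hrest : ∑ k ∈ Finset.Icc (i + 2) N, s ^ (k - i) / c k =
          s * ∑ k ∈ Finset.Icc (i + 2) N, s ^ (k - (i + 1)) / c k := by
        rw [Finset.mul_sum]
        apply Finset.sum_congr rfl
        intro k hk
        simp only [Finset.mem_Icc] at hk
        have hki : k - i = (k - (i + 1)) + 1 := by omega
        rw [hki, pow_succ]
        ring
      simp only [hxdef]
      rw [hsplit, Finset.sum_insert hnot, hterm, hrest]
      ring
    have hinv : η / (B - x (i + 1)) < 1 / c (i + 1) := by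
      rw [div_lt_div_iff₀ (by linarith) hc1]
      nlinarith
    have hmono : s * ((1 - lam) * η / (B - x (i + 1)) + x (i + 1)) ≤
        s * ((1 - lam) / c (i + 1) + x (i + 1)) := by
      apply mul_le_mul_of_nonneg_left _ hs0.le
      have : (1 - lam) * (η / (B - x (i + 1))) ≤ (1 - lam) * (1 / c (i + 1)) :=
        mul_le_mul_of_nonneg_left hinv.le (by linarith)
      have h' : (1 - lam) / c (i + 1) = (1 - lam) * (1 / c (i + 1)) := by ring
      have h'' : (1 - lam) * η / (B - x (i + 1)) = (1 - lam) * (η / (B - x (i + 1))) := by ring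
      rw [h', h'']
      linarith [this]
    have hstep := step_ineq s η B (x (i + 1)) hs0 hs1 hη hBpos (hx_nonneg (i + 1)) hxi1B hG
    rw [hs2] at hstep
    rw [hrec]
    calc x (i + 1) + ε = x (i + 1) + (1 - s) * (s * (1 + s) * η - B ^ 2 / 4) / B := rfl
      _ ≤ s * ((1 - lam) * η / (B - x (i + 1)) + x (i + 1)) := hstep
      _ ≤ s * ((1 - lam) / c (i + 1) + x (i + 1)) := hmono
  have hN2 : 2 ≤ N := by omega
  have climb : ∀ j, j ≤ N - 1 → (j : ℝ) * ε ≤ x (N - j) := by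
    intro j
    induction j with
    | zero => intro _; simp [hxN]
    | succ j ih =>
      intro hj
      have hj' : j ≤ N - 1 := by omega
      have hih := ih hj'
      have hi1 : 1 ≤ N - (j + 1) := by omega
      have hi2 : N - (j + 1) + 1 ≤ N := by omega
      have hk := key (N - (j + 1)) hi1 hi2
      have heq : N - (j + 1) + 1 = N - j := by omega
      rw [heq] at hk
      push_cast
      linarith
  have hclimb := climb (N - 1) le_rfl
  have heq1 : N - (N - 1) = 1 := by omega
  rw [heq1] at hclimb
  have hx1 : x 1 < B := by
    have h := hx_lt 1 (by omega) (by omega)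
    have h2 := mul_pos hη (hc 1 (by omega) (by omega))
    linarith
  have hceil : B / ε ≤ (⌈B / ε⌉₊ : ℝ) := Nat.le_ceil _
  have hNcast : ((⌈B / ε⌉₊ : ℝ) + 1) ≤ ((N - 1 : ℕ) : ℝ) := by
    have : ⌈B / ε⌉₊ + 1 ≤ N - 1 := by omega
    exact_mod_cast this
  have : B < ((N - 1 : ℕ) : ℝ) * ε := by
    have h1 : B / ε + 1 ≤ ((N - 1 : ℕ) : ℝ) := by linarith
    have h2 : (B / ε + 1) * ε ≤ ((N - 1 : ℕ) : ℝ) * ε :=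
      mul_le_mul_of_nonneg_right h1 hε.le
    have h3 : (B / ε + 1) * ε = B + ε := by field_simp
    linarith
  linarith
end

section
/- For every η > 0 and every δ > 0 there exists λ₀ ∈ (0,1) such that for every λ ∈ (λ₀,1) there exists N₀ ∈ ℕ such that for every integer N ≥ N₀ and all positive reals c_1,…,c_N one has max_{1 ≤ i ≤ N} (√λ)^i·[ (1−λ)·Σ_{k=i+1}^{N} (√λ)^{k−i}/c_k + η·c_i ] ≥ √(2η) − δ. -/
private lemma tele17 (v g : ℕ → ℝ) (N : ℕ)
    (h : ∀ i, 2 ≤ i → i ≤ N → v i + g i ≤ v (i+1)) :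
    ∀ j, 2 + j ≤ N + 1 → v 2 + ∑ k ∈ Finset.Icc 2 (1+j), g k ≤ v (2+j) := by
  intro j
  induction j with
  | zero => intro _; simp
  | succ n ih =>
      intro hj
      have h1 := ih (by omega)
      have h2 := h (2+n) (by omega) (by omega)
      have e : 1 + (n+1) = (1+n) + 1 := by omega
      rw [e, Finset.sum_Icc_succ_top (by omega)]
      have e2 : 1 + n + 1 = 2 + n := by omega
      rw [e2]
      have e3 : 2 + (n+1) = (2+n) + 1 := by omega
      rw [e3]
      linarith

private lemma geomIcc17 (lam : ℝ) :
    ∀ m : ℕ, ∑ k ∈ Finset.Icc 2 (m+1), ((1-lam)*lam^k) = lam^2 - lam^(m+2) := by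
  intro m
  induction m with
  | zero => simp
  | succ n ih =>
      rw [show n+1+1 = (n+1)+1 from rfl, Finset.sum_Icc_succ_top (by omega), ih]
      ring

private lemma geomBound17 (lam : ℝ) (h0 : 0 ≤ lam) (h1 : lam < 1) (a b : ℕ) :
    ∑ i ∈ Finset.Icc a b, lam^i ≤ 1/(1-lam) := by
  have h2 : ∑ i ∈ Finset.Icc a b, lam^i ≤ ∑ i ∈ Finset.range (b+1), lam^i := by
    apply Finset.sum_le_sum_of_subset_of_nonneg
    · intro x hx
      simp only [Finset.mem_Icc] at hx
      simp only [Finset.mem_range]; omega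
    · exact fun i _ _ => pow_nonneg h0 i
  have h3 : ∑ i ∈ Finset.range (b+1), lam^i = (1 - lam^(b+1))/(1-lam) := by
    rw [geom_sum_eq (by linarith)]
    rw [div_eq_div_iff (by linarith) (by linarith)]
    ring
  have h4 : 0 ≤ lam^(b+1) := pow_nonneg h0 _
  have h5 : (1 - lam^(b+1))/(1-lam) ≤ 1/(1-lam) := by
    gcongr
    · linarith
  linarith

set_option maxHeartbeats 1000000 in
/-- For every `η > 0` and `δ > 0` there is `λ₀ ∈ (0,1)` such that for every `λ ∈ (λ₀,1)`
there is `N₀` such that for every `N ≥ N₀` and all positive `c_1,…,c_N`,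
`max_{1 ≤ i ≤ N} (√λ)^i [(1-λ) Σ_{k=i+1}^{N} (√λ)^{k-i}/c_k + η c_i] ≥ √(2η) - δ`. -/
theorem stmt17 (η δ : ℝ) (hη : 0 < η) (hδ : 0 < δ) :
    ∃ lam0 ∈ Set.Ioo (0:ℝ) 1, ∀ lam ∈ Set.Ioo lam0 1, ∃ N0 : ℕ, ∀ N : ℕ, N0 ≤ N →
      ∀ c : ℕ → ℝ, (∀ k, 1 ≤ k → k ≤ N → 0 < c k) →
        ∃ i : ℕ, 1 ≤ i ∧ i ≤ N ∧
          (Real.sqrt lam) ^ i *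
              ((1 - lam) * ∑ k ∈ Finset.Icc (i + 1) N, (Real.sqrt lam) ^ (k - i) / c k +
                η * c i) ≥
            Real.sqrt (2 * η) - δ := by
  set M : ℝ := Real.sqrt (2*η) - δ with hMdef
  by_cases hM0 : M ≤ 0
  · -- trivial case: the expression is positive
    refine ⟨1/2, ⟨by norm_num, by norm_num⟩, ?_⟩
    intro lam hlam
    refine ⟨1, ?_⟩
    intro N hN c hc
    refine ⟨1, le_rfl, hN, ?_⟩
    have h0 : (0:ℝ) < lam := lt_trans (by norm_num) hlam.1
    have hs : 0 < Real.sqrt lam := Real.sqrt_pos.mpr h0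
    have hsum : 0 ≤ ∑ k ∈ Finset.Icc (1+1) N, (Real.sqrt lam)^(k-1)/c k := by
      apply Finset.sum_nonneg
      intro k hk
      simp only [Finset.mem_Icc] at hk
      exact div_nonneg (pow_nonneg hs.le _) (hc k (by omega) hk.2).le
    have h1 : 0 < (Real.sqrt lam)^1 * ((1-lam) * ∑ k ∈ Finset.Icc (1+1) N,
        (Real.sqrt lam)^(k-1)/c k + η * c 1) := by
      apply mul_pos (pow_pos hs 1)
      have : 0 < η * c 1 := mul_pos hη (hc 1 le_rfl hN)
      have h2 : 0 ≤ (1-lam) * ∑ k ∈ Finset.Icc (1+1) N, (Real.sqrt lam)^(k-1)/c k :=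
        mul_nonneg (by linarith [hlam.2]) hsum
      linarith
    exact le_of_lt (lt_of_le_of_lt hM0 h1)
  · push_neg at hM0
    have h2η : (0:ℝ) < 2*η := by linarith
    have hsq : Real.sqrt (2*η) ^ 2 = 2*η := Real.sq_sqrt h2η.le
    have hM2 : M^2 < 2*η := by nlinarith [Real.sqrt_nonneg (2*η)]
    set ε : ℝ := 2*η - M^2 with hεdef
    have hε : 0 < ε := by linarith
    set K : ℕ := ⌈32*η/ε⌉₊ + 2 with hKdef
    have hK2 : 2 ≤ K := by omega
    have hKpos : (0:ℝ) < K := by positivity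
    have hKb : 32*η/ε ≤ (K:ℝ) := by
      have := Nat.le_ceil (32*η/ε)
      have h2 : ((⌈32*η/ε⌉₊ : ℕ) : ℝ) ≤ (K:ℝ) := by exact_mod_cast Nat.le_add_right _ 2
      linarith
    have hKe : 2*η/(K:ℝ) ≤ ε/16 := by
      rw [div_le_div_iff₀ hKpos (by norm_num)]
      rw [div_le_iff₀ hε] at hKb
      linarith
    set d : ℝ := min (ε/(32*η*K)) (1/(2*K)) with hddef
    have hd0 : 0 < d := lt_min (by positivity) (by positivity)
    have hd1 : d ≤ 1/4 := by
      have : 1/(2*(K:ℝ)) ≤ 1/4 := by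
        apply div_le_div_of_nonneg_left (by norm_num) (by norm_num)
        have : (2:ℝ) ≤ (K:ℝ) := by exact_mod_cast hK2
        linarith
      exact le_trans (min_le_right _ _) this
    clear_value M ε K d
    refine ⟨1 - d, ⟨by linarith, by linarith⟩, ?_⟩
    intro lam hlam
    have hl1 : lam < 1 := hlam.2
    have hld : 1 - d < lam := hlam.1
    have hlam0 : 0 < lam := by linarith
    have hml : 0 < 1 - lam := by linarith
    have hdl : 1 - lam < d := by linarith
    obtain ⟨N1, hN1⟩ := exists_pow_lt_of_lt_one (show (0:ℝ) < ε/(16*η) by positivity) hl1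
    refine ⟨max N1 (K+2), ?_⟩
    intro N hN c hc
    by_contra hcon
    push_neg at hcon
    have hNK : K + 2 ≤ N := le_trans (le_max_right _ _) hN
    have hNN1 : N1 ≤ N := le_trans (le_max_left _ _) hN
    set s : ℝ := Real.sqrt lam with hsdef
    have hs0 : 0 < s := Real.sqrt_pos.mpr hlam0
    have hs2 : s^2 = lam := Real.sq_sqrt hlam0.le
    set a : ℕ → ℝ := fun k => s^k / c k with hadef
    set u : ℕ → ℝ := fun i => M - (1-lam) * ∑ k ∈ Finset.Icc i N, a k with hudef
    set r : ℕ → ℝ := fun i => (1-lam)*η*lam^i with hrdef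
    have hrpos : ∀ i : ℕ, 0 < r i := fun i => mul_pos (mul_pos hml hη) (pow_pos hlam0 i)
    clear_value s a u r
    -- main hypothesis in convenient form
    have H : ∀ i, 1 ≤ i → i ≤ N →
        (1-lam) * ∑ k ∈ Finset.Icc (i+1) N, a k + η*(s^i * c i) < M := by
      intro i h1 h2
      have h3 := hcon i h1 h2
      have h4 : s^i * ∑ k ∈ Finset.Icc (i+1) N, s^(k-i)/c k
          = ∑ k ∈ Finset.Icc (i+1) N, a k := by
        rw [Finset.mul_sum]
        apply Finset.sum_congr rfl
        intro k hk
        simp only [Finset.mem_Icc] at hk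
        rw [hadef]
        show s^i * (s^(k-i)/c k) = s^k / c k
        rw [← mul_div_assoc, pow_mul_pow_sub s (by omega : i ≤ k)]
      have h5 : s^i * ((1-lam) * ∑ k ∈ Finset.Icc (i+1) N, s^(k-i)/c k + η * c i)
          = (1-lam) * (s^i * ∑ k ∈ Finset.Icc (i+1) N, s^(k-i)/c k) + η*(s^i * c i) := by
        ring
      rw [h5, h4] at h3
      exact h3
    have hu_gt : ∀ i, 1 ≤ i → i ≤ N → η*(s^i * c i) < u (i+1) := by
      intro i h1 h2
      have := H i h1 h2
      simp only [hudef]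
      linarith
    have hup : ∀ i, 2 ≤ i → i ≤ N+1 → 0 < u i := by
      intro i h1 h2
      have h3 := hu_gt (i-1) (by omega) (by omega)
      have h4 : 0 < η*(s^(i-1) * c (i-1)) :=
        mul_pos hη (mul_pos (pow_pos hs0 _) (hc (i-1) (by omega) (by omega)))
      have e : i - 1 + 1 = i := by omega
      rw [e] at h3
      linarith
    have hB : ∀ i, 1 ≤ i → i ≤ N → u i ≤ u (i+1) - r i / u (i+1) := by
      intro i h1 h2
      have hui : 0 < u (i+1) := hup (i+1) (by omega) (by omega)
      have hci : 0 < c i := hc i h1 h2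
      have hsplit : ∑ k ∈ Finset.Icc i N, a k = a i + ∑ k ∈ Finset.Icc (i+1) N, a k := by
        have e : Finset.Icc i N = insert i (Finset.Icc (i+1) N) := by
          ext x
          simp only [Finset.mem_Icc, Finset.mem_insert]
          omega
        rw [e, Finset.sum_insert (by simp)]
      have h5 : u i = u (i+1) - (1-lam) * a i := by
        simp only [hudef, hsplit]; ring
      have hsin : 0 < s^i := pow_pos hs0 i
      have hgt := hu_gt i h1 h2
      have hli : lam^i = (s^i)^2 := by
        rw [← hs2, ← pow_mul, ← pow_mul, Nat.mul_comm]
      have key : r i / u (i+1) ≤ (1-lam) * a i := by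
        rw [div_le_iff₀ hui]
        simp only [hrdef, hadef, hli]
        have hrw : (1-lam) * (s^i / c i) * u (i+1) = ((1-lam) * s^i * u (i+1)) / c i := by
          ring
        rw [hrw, le_div_iff₀ hci]
        nlinarith [mul_le_mul_of_nonneg_left hgt.le (mul_pos hml hsin).le]
      linarith
    have hD : ∀ i, 2 ≤ i → i ≤ N → u i ^2 + r i ≤ u (i+1)^2 := by
      intro i h1 h2
      have hui1 : 0 < u (i+1) := hup (i+1) (by omega) (by omega)
      have hui : 0 < u i := hup i h1 (by omega)
      have hb := hB i (by omega) h2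
      have hri := hrpos i
      have h7 := mul_le_mul_of_nonneg_right hb hui1.le
      have h8 : (u (i+1) - r i / u (i+1)) * u (i+1) = u (i+1)^2 - r i := by
        field_simp
      rw [h8] at h7
      have hle : u i ≤ u (i+1) := by
        have := div_pos hri hui1
        linarith
      have h9 : u i ^ 2 ≤ u i * u (i+1) := by nlinarith
      linarith
    have hsumr : ∀ i, 1 ≤ i → ∑ k ∈ Finset.Icc 2 i, r k = η*(lam^2 - lam^(i+1)) := by
      intro i h1
      obtain ⟨m, rfl⟩ : ∃ m, i = m + 1 := ⟨i-1, by omega⟩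
      have hg := geomIcc17 lam m
      have : ∑ k ∈ Finset.Icc 2 (m+1), r k = η * ∑ k ∈ Finset.Icc 2 (m+1), ((1-lam)*lam^k) := by
        rw [Finset.mul_sum]
        apply Finset.sum_congr rfl
        intro k _
        simp only [hrdef]; ring
      rw [this, hg]
    have hE : ∀ i, 2 ≤ i → i ≤ N → η*lam^2*(1 - lam^(i-1)) ≤ u (i+1)^2 := by
      intro i h1 h2
      have tel := tele17 (fun j => u j ^2) r N hD (i-1) (by omega)
      have e1 : 2 + (i-1) = i + 1 := by omega
      have e2 : 1 + (i-1) = i := by omega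
      rw [e1, e2] at tel
      have hs1 := hsumr i (by omega)
      have e3 : lam^(i+1) = lam^2 * lam^(i-1) := by
        rw [← pow_add]; congr 1; omega
      have hu2 : 0 ≤ u 2 ^2 := sq_nonneg _
      nlinarith
    have hF : ∀ i, 2 ≤ i → i ≤ N →
        u i ^2 + (2*r i - r i^2/(u (i+1))^2) ≤ u (i+1)^2 := by
      intro i h1 h2
      have hui1 : 0 < u (i+1) := hup (i+1) (by omega) (by omega)
      have hui : 0 < u i := hup i h1 (by omega)
      have hb := hB i (by omega) h2
      have hsq2 : u i ^2 ≤ (u (i+1) - r i/u (i+1))^2 := by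
        apply pow_le_pow_left₀ hui.le hb
      have hexp : (u (i+1) - r i/u (i+1))^2 = u (i+1)^2 - 2*r i + r i^2/(u (i+1))^2 := by
        field_simp
        ring
      linarith
    -- sharp telescoping up to N+1
    have tel2 := tele17 (fun j => u j ^2) (fun i => 2*r i - r i^2/(u (i+1))^2) N hF
      (N-1) (by omega)
    have e1 : 2 + (N-1) = N + 1 := by omega
    have e2 : 1 + (N-1) = N := by omega
    rw [e1, e2] at tel2
    have huN1 : u (N+1) = M := by
      rw [hudef]
      simp only
      rw [Finset.Icc_eq_empty (by omega)]
      simp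
    rw [huN1] at tel2
    have hsum2 : ∑ k ∈ Finset.Icc 2 N, (2*r k - r k^2/(u (k+1))^2)
        = 2*(∑ k ∈ Finset.Icc 2 N, r k) - ∑ k ∈ Finset.Icc 2 N, r k^2/(u (k+1))^2 := by
      rw [Finset.sum_sub_distrib, Finset.mul_sum]
    have hsrN : ∑ k ∈ Finset.Icc 2 N, r k = η*(lam^2 - lam^(N+1)) := hsumr N (by omega)
    -- positivity of 1 - lam^K
    have hlamK : 0 < 1 - lam^K := by
      have := pow_lt_one₀ hlam0.le hl1 (show K ≠ 0 by omega)
      linarith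
    -- Bernoulli: lam^(K-1) ≥ 1/2
    have hBer : (1:ℝ)/2 ≤ lam^(K-1) := by
      have h1 := one_add_mul_le_pow (show (-2:ℝ) ≤ lam - 1 by linarith) (K-1)
      rw [show (1:ℝ) + (lam - 1) = lam by ring] at h1
      have hc1 : ((K-1 : ℕ) : ℝ) = (K:ℝ) - 1 := by
        rw [Nat.cast_sub (by omega)]; norm_num
      rw [hc1] at h1
      have hd2 : 1 - lam < 1/(2*(K:ℝ)) := by
        have : d ≤ 1/(2*(K:ℝ)) := by rw [hddef]; exact min_le_right _ _
        linarith
      have h13 : ((K:ℝ) - 1) * (lam - 1) ≥ -((K:ℝ) * (1 - lam)) := by linarith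
      have hK12 : (K:ℝ) * (1 - lam) ≤ 1/2 := by
        rw [lt_div_iff₀ (by positivity)] at hd2
        linarith
      linarith
    -- 1 - lam^K ≥ K * lam^(K-1) * (1-lam)
    have hgeomK : (K:ℝ) * lam^(K-1) * (1-lam) ≤ 1 - lam^K := by
      have hgs : (∑ j ∈ Finset.range K, lam^j) * (lam - 1) = lam^K - 1 := geom_sum_mul lam K
      have hlow : (K:ℝ) * lam^(K-1) ≤ ∑ j ∈ Finset.range K, lam^j := by
        have h2 := Finset.card_nsmul_le_sum (Finset.range K) (fun j => lam^j) (lam^(K-1))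
          (fun j hj => by
            apply pow_le_pow_of_le_one hlam0.le hl1.le
            simp only [Finset.mem_range] at hj
            omega)
        rw [Finset.card_range, nsmul_eq_mul] at h2
        exact h2
      linarith [mul_le_mul_of_nonneg_right hlow hml.le]
    have hKhalf : (K:ℝ) * (1 - lam) / 2 ≤ 1 - lam^K := by
      have h14 := mul_le_mul_of_nonneg_left hBer
        (mul_nonneg (Nat.cast_nonneg K : (0:ℝ) ≤ K) hml.le)
      linarith [h14, hgeomK]
    -- middle error bound
    have herr1 : ∀ i ∈ Finset.Icc 2 K, r i^2/(u (i+1))^2 ≤ (1-lam)*η := by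
      intro i hi
      simp only [Finset.mem_Icc] at hi
      have hiN : i ≤ N := by omega
      have hE' := hE i hi.1 hiN
      have hu2 : 0 < u (i+1)^2 := pow_pos (hup (i+1) (by omega) (by omega)) 2
      rw [div_le_iff₀ hu2]
      have hstep : r i^2 ≤ (1-lam)*η*(η*lam^2*(1-lam^(i-1))) := by
        obtain ⟨m, rfl⟩ : ∃ m, i = m + 2 := ⟨i-2, by omega⟩
        have e3 : m + 2 - 1 = m + 1 := by omega
        rw [e3, hrdef]
        simp only
        have e4 : lam^(m+1) = lam^m * lam := pow_succ lam m
        have e5 : lam^(m+2) = lam^m * lam^2 := by rw [pow_add]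
        have p2 : lam^m ≤ 1 := pow_le_one₀ hlam0.le hl1.le
        have hp : 0 < lam^m := pow_pos hlam0 m
        have q1 : lam^m * (1 - lam) ≤ 1 - lam^(m+1) := by
          rw [e4]; nlinarith
        have q2 : lam^m * lam^2 ≤ 1 := by
          have : lam^2 ≤ 1 := pow_le_one₀ hlam0.le hl1.le
          nlinarith
        rw [e5]
        have hA : (0:ℝ) ≤ ((1-lam)*η)^2 := sq_nonneg _
        have hx : (0:ℝ) ≤ lam^m * lam^2 := by positivity
        calc ((1-lam)*η*(lam^m*lam^2))^2
            = ((1-lam)*η)^2 * ((lam^m*lam^2)*(lam^m*lam^2)) := by ring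
          _ ≤ ((1-lam)*η)^2 * (lam^m*lam^2) :=
              mul_le_mul_of_nonneg_left (mul_le_of_le_one_left hx q2) hA
          _ = ((1-lam)*η^2*lam^2) * (lam^m*(1-lam)) := by ring
          _ ≤ ((1-lam)*η^2*lam^2) * (1-lam^(m+1)) :=
              mul_le_mul_of_nonneg_left q1 (by positivity)
          _ = (1-lam)*η*(η*lam^2*(1-lam^(m+1))) := by ring
      calc r i^2 ≤ (1-lam)*η*(η*lam^2*(1-lam^(i-1))) := hstep
        _ ≤ (1-lam)*η*(u (i+1)^2) := by
            have := mul_le_mul_of_nonneg_left hE' (mul_pos hml hη).le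
            linarith
    -- tail error bound
    have herr2 : ∀ i ∈ Finset.Icc (K+1) N, r i^2/(u (i+1))^2
        ≤ ((1-lam)^2*η/(1-lam^K)) * lam^i := by
      intro i hi
      simp only [Finset.mem_Icc] at hi
      have hi2 : 2 ≤ i := by omega
      have hE' := hE i hi2 hi.2
      have hu2 : 0 < u (i+1)^2 := pow_pos (hup (i+1) (by omega) (by omega)) 2
      have hlamiK : lam^(i-1) ≤ lam^K := pow_le_pow_of_le_one hlam0.le hl1.le (by omega)
      have hlow : η*lam^2*(1-lam^K) ≤ u (i+1)^2 := by
        have h15 : 1 - lam^K ≤ 1 - lam^(i-1) := by linarith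
        have h16 := mul_le_mul_of_nonneg_left h15
          (by positivity : (0:ℝ) ≤ η*lam^2)
        linarith
      have hlowpos : 0 < η*lam^2*(1-lam^K) := by positivity
      have step1 : r i^2/(u (i+1))^2 ≤ r i^2/(η*lam^2*(1-lam^K)) :=
        div_le_div_of_nonneg_left (sq_nonneg _) hlowpos hlow
      have step2 : r i^2/(η*lam^2*(1-lam^K)) ≤ ((1-lam)^2*η/(1-lam^K)) * lam^i := by
        rw [div_le_iff₀ hlowpos, hrdef]
        simp only
        have e6 : lam^i ≤ lam^2 := pow_le_pow_of_le_one hlam0.le hl1.le hi2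
        have hpi : 0 < lam^i := pow_pos hlam0 i
        have e7 : ((1-lam)^2*η/(1-lam^K)) * (1-lam^K) = (1-lam)^2*η := by
          field_simp
        calc ((1-lam)*η*lam^i)^2 = ((1-lam)^2*η^2) * (lam^i*lam^i) := by ring
          _ ≤ ((1-lam)^2*η^2) * (lam^i*lam^2) :=
              mul_le_mul_of_nonneg_left (mul_le_mul_of_nonneg_left e6 hpi.le)
                (by positivity)
          _ = ((1-lam)^2*η) * lam^i * (η*lam^2) := by ring
          _ = ((1-lam)^2*η/(1-lam^K)) * (1-lam^K) * lam^i * (η*lam^2) := by rw [e7]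
          _ = ((1-lam)^2*η/(1-lam^K)) * lam^i * (η*lam^2*(1-lam^K)) := by ring
      linarith
    -- sum of errors
    have hsplitE : ∑ k ∈ Finset.Icc 2 N, r k^2/(u (k+1))^2
        = (∑ k ∈ Finset.Icc 2 K, r k^2/(u (k+1))^2)
          + ∑ k ∈ Finset.Icc (K+1) N, r k^2/(u (k+1))^2 := by
      have e8 : Finset.Icc 2 N = Finset.Ioc 1 N := by
        ext x; simp only [Finset.mem_Icc, Finset.mem_Ioc]; omega
      have e9 : Finset.Icc 2 K = Finset.Ioc 1 K := by
        ext x; simp only [Finset.mem_Icc, Finset.mem_Ioc]; omega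
      have e10 : Finset.Icc (K+1) N = Finset.Ioc K N := by
        ext x; simp only [Finset.mem_Icc, Finset.mem_Ioc]; omega
      rw [e8, e9, e10,
        Finset.sum_Ioc_consecutive (fun k => r k^2/(u (k+1))^2) (by omega : 1 ≤ K)
          (by omega : K ≤ N)]
    have hmid : ∑ k ∈ Finset.Icc 2 K, r k^2/(u (k+1))^2 ≤ (K:ℝ)*((1-lam)*η) := by
      have h2 := Finset.sum_le_card_nsmul (Finset.Icc 2 K) _ _ herr1
      rw [Nat.card_Icc, nsmul_eq_mul] at h2
      have h3 : ((K + 1 - 2 : ℕ):ℝ) ≤ (K:ℝ) := by exact_mod_cast (by omega : K + 1 - 2 ≤ K)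
      have hpos : (0:ℝ) ≤ (1-lam)*η := (mul_pos hml hη).le
      calc ∑ k ∈ Finset.Icc 2 K, r k^2/(u (k+1))^2 ≤ ((K + 1 - 2 : ℕ):ℝ) * ((1-lam)*η) := h2
        _ ≤ (K:ℝ)*((1-lam)*η) := mul_le_mul_of_nonneg_right h3 hpos
    have htail : ∑ k ∈ Finset.Icc (K+1) N, r k^2/(u (k+1))^2 ≤ 2*η/(K:ℝ) := by
      have h2 := Finset.sum_le_sum herr2
      have h3 : ∑ i ∈ Finset.Icc (K+1) N, ((1-lam)^2*η/(1-lam^K)) * lam^i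
          = ((1-lam)^2*η/(1-lam^K)) * ∑ i ∈ Finset.Icc (K+1) N, lam^i := by
        rw [Finset.mul_sum]
      rw [h3] at h2
      have h4 := geomBound17 lam hlam0.le hl1 (K+1) N
      have hC : (0:ℝ) ≤ (1-lam)^2*η/(1-lam^K) := by positivity
      have h5 : ((1-lam)^2*η/(1-lam^K)) * (∑ i ∈ Finset.Icc (K+1) N, lam^i)
          ≤ ((1-lam)^2*η/(1-lam^K)) * (1/(1-lam)) := mul_le_mul_of_nonneg_left h4 hC
      have h6 : ((1-lam)^2*η/(1-lam^K)) * (1/(1-lam)) = (1-lam)*η/(1-lam^K) := by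
        field_simp
      have h7 : (1-lam)*η/(1-lam^K) ≤ 2*η/(K:ℝ) := by
        rw [div_le_div_iff₀ hlamK hKpos]
        linarith [mul_le_mul_of_nonneg_left hKhalf (by positivity : (0:ℝ) ≤ 2*η)]
      linarith
    have hd3 : d ≤ ε/(32*η*(K:ℝ)) := by rw [hddef]; exact min_le_left _ _
    have h8 : (1-lam) * (32*η*(K:ℝ)) < ε := by
      have h9 : 1 - lam < ε/(32*η*(K:ℝ)) := lt_of_lt_of_le hdl hd3
      rw [lt_div_iff₀ (by positivity)] at h9
      exact h9
    have hK1 : (1:ℝ) ≤ (K:ℝ) := by exact_mod_cast (by omega : 1 ≤ K)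
    have hmid2 : (K:ℝ)*((1-lam)*η) ≤ ε/32 := by linarith
    have h2lam : 2*η*lam^(N+1) ≤ ε/8 := by
      have hmono : lam^(N+1) ≤ lam^N1 := pow_le_pow_of_le_one hlam0.le hl1.le (by omega)
      have h10 := hN1
      rw [lt_div_iff₀ (by positivity : (0:ℝ) < 16*η)] at h10
      have h17 := mul_le_mul_of_nonneg_left hmono hη.le
      linarith
    have hlam2 : 2*η - ε/8 ≤ 2*η*lam^2 := by
      have h11 : (1-lam)*(32*η) ≤ (1-lam)*(32*η)*(K:ℝ) := by
        have h18 := mul_le_mul_of_nonneg_left hK1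
          (by positivity : (0:ℝ) ≤ (1-lam)*(32*η))
        linarith
      have h12 : (1-lam)*(32*η) < ε := by linarith
      have h13 : (0:ℝ) ≤ 2*η*(1-lam)^2 := by positivity
      linarith [h12, h13]
    have hu22 : (0:ℝ) ≤ u 2^2 := sq_nonneg _
    rw [hsum2, hsrN, hsplitE] at tel2
    have hfin : 2*η - ε/8 - ε/8 - ε/32 - ε/16 ≤ M^2 := by linarith
    rw [hεdef] at hfin
    linarith
end

section
/- Fix λ ∈ (0,1), η > 0 and N ≥ 2. For D = (d_1,…,d_N) with d_1 ≥ 0 and d_k > 0 for 2 ≤ k ≤ N, define φ̃_i(D) = (1−λ)·Σ_{k=i+1}^{N} λ^k/d_k + η·d_i for 1 ≤ i ≤ N, and φ̃_max(D) = max_{1 ≤ k ≤ N} φ̃_k(D). If D attains the minimum of φ̃_max over all such tuples (i.e., φ̃_max(D) ≤ φ̃_max(D') for every admissible D'), then φ̃_i(D) = φ̃_j(D) for all 1 ≤ i, j ≤ N. -/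
/-- `φ̃_i(D) = (1-λ) Σ_{k=i+1}^{N} λ^k / d_k + η d_i`. -/
noncomputable def phiTilde (lam η : ℝ) (N : ℕ) (d : ℕ → ℝ) (i : ℕ) : ℝ :=
  (1 - lam) * ∑ k ∈ Finset.Icc (i + 1) N, lam ^ k / d k + η * d i

/-- If `D` minimizes `φ̃_max(D) = max_{1 ≤ k ≤ N} φ̃_k(D)` over all admissible tuples
(`d_1 ≥ 0`, `d_k > 0` for `2 ≤ k ≤ N`), then all the `φ̃_i(D)` are equal. -/
theorem stmt18 (lam η : ℝ) (hlam : lam ∈ Set.Ioo (0:ℝ) 1) (hη : 0 < η)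
    (N : ℕ) (hN : 2 ≤ N)
    (d : ℕ → ℝ) (hd1 : 0 ≤ d 1) (hd : ∀ k, 2 ≤ k → k ≤ N → 0 < d k)
    (hmin : ∀ d' : ℕ → ℝ, 0 ≤ d' 1 → (∀ k, 2 ≤ k → k ≤ N → 0 < d' k) →
      (Finset.Icc 1 N).sup' (Finset.nonempty_Icc.mpr (by omega)) (phiTilde lam η N d) ≤
        (Finset.Icc 1 N).sup' (Finset.nonempty_Icc.mpr (by omega)) (phiTilde lam η N d')) :
    ∀ i ∈ Finset.Icc 1 N, ∀ j ∈ Finset.Icc 1 N,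
      phiTilde lam η N d i = phiTilde lam η N d j := by
  obtain ⟨hlam0, hlam1⟩ := hlam
  obtain ⟨M, hMdef⟩ : ∃ M : ℝ, M = (Finset.Icc 1 N).sup'
      (Finset.nonempty_Icc.mpr (by omega)) (phiTilde lam η N d) := ⟨_, rfl⟩
  have hmin' : ∀ d' : ℕ → ℝ, 0 ≤ d' 1 → (∀ k, 2 ≤ k → k ≤ N → 0 < d' k) →
      M ≤ (Finset.Icc 1 N).sup' (Finset.nonempty_Icc.mpr (by omega)) (phiTilde lam η N d') := by
    intro d' h1 h2
    rw [hMdef]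
    exact hmin d' h1 h2
  clear hmin
  have hle : ∀ q ∈ Finset.Icc 1 N, phiTilde lam η N d q ≤ M := by
    intro q hq
    rw [hMdef]
    exact Finset.le_sup' _ hq
  have key : ∀ p ∈ Finset.Icc 1 N, phiTilde lam η N d p = M := by
    intro p hp
    refine le_antisymm (hle p hp) ?_
    by_contra hcon
    push_neg at hcon
    obtain ⟨hp1, hpN⟩ := Finset.mem_Icc.mp hp
    have hdp0 : 0 ≤ d p := by
      rcases eq_or_lt_of_le hp1 with h | h
      · exact h ▸ hd1
      · exact (hd p h hpN).le
    obtain ⟨δ, hδdef⟩ : ∃ δ : ℝ, δ = (M - phiTilde lam η N d p) / (2*η) := ⟨_, rfl⟩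
    have hδ0 : 0 < δ := hδdef ▸ div_pos (by linarith) (by linarith)
    have hM2 : 2*η*δ = M - phiTilde lam η N d p := by
      rw [hδdef]; field_simp
    obtain ⟨c, hcdef⟩ : ∃ c : ℝ, c = ∑ k ∈ Finset.Icc (p+1) N, 2/(d k)^2 := ⟨_, rfl⟩
    have hc0 : 0 ≤ c := hcdef ▸ Finset.sum_nonneg (fun k _ => by positivity)
    obtain ⟨K, hKdef⟩ : ∃ K : ℝ, K = 1 + 2*c/η := ⟨_, rfl⟩
    have hK1 : 1 ≤ K := by
      have : 0 ≤ 2*c/η := by positivity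
      rw [hKdef]; linarith
    have hK0 : 0 < K := by linarith
    have hKm : ∀ m : ℕ, 0 < K^m := fun m => pow_pos hK0 m
    have hcK : 2*c ≤ η*K := by
      have hηK : η * K = η + 2*c := by rw [hKdef]; field_simp
      linarith
    obtain ⟨g, hgdef⟩ : ∃ g : ℝ, g = (1-lam)*lam^p*δ/(d p*(d p+δ)+1) := ⟨_, rfl⟩
    have honelam : 0 < 1 - lam := by linarith
    have hg0 : 0 < g := by
      rw [hgdef]
      apply div_pos
      · have := pow_pos hlam0 p
        positivity
      · have : 0 ≤ d p * (d p + δ) := mul_nonneg hdp0 (by linarith)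
        linarith
    -- choice of ε
    have hεex : ∃ ε : ℝ, 0 < ε ∧ (∀ k, p+1 ≤ k → k ≤ N → ε * K^(N-k) ≤ d k / 2) ∧
        ε * (c * K^N) ≤ η*δ/2 ∧ ε * (c * K^N) ≤ g/2 := by
      by_cases hpN' : p = N
      · have hcc : c = 0 := by
          rw [hcdef, hpN', Finset.Icc_eq_empty (by omega), Finset.sum_empty]
        refine ⟨1, one_pos, ?_, ?_, ?_⟩
        · intro k h1 h2; omega
        · rw [hcc]; linarith [mul_pos hη hδ0]
        · rw [hcc]; linarith [hg0]
      · have hne : (Finset.Icc (p+1) N).Nonempty := Finset.nonempty_Icc.mpr (by omega)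
        obtain ⟨μ, hμdef⟩ : ∃ μ : ℝ, μ = (Finset.Icc (p+1) N).inf' hne d := ⟨_, rfl⟩
        have hμle : ∀ k ∈ Finset.Icc (p+1) N, μ ≤ d k :=
          fun k hk => hμdef ▸ Finset.inf'_le d hk
        have hμ0 : 0 < μ := by
          obtain ⟨k, hk, hkeq⟩ := Finset.exists_mem_eq_inf' hne d
          rw [hμdef, hkeq]
          obtain ⟨h1, h2⟩ := Finset.mem_Icc.mp hk
          exact hd k (by omega) h2
        have hX0 : 0 < min (η*δ) g := lt_min (mul_pos hη hδ0) hg0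
        have hKN : 0 < K^N := hKm N
        have hcKN : 0 ≤ c*K^N := mul_nonneg hc0 hKN.le
        have hden : (0:ℝ) < 2*(c*K^N+1) := by linarith [hcKN]
        obtain ⟨ε, hεdef⟩ : ∃ ε : ℝ,
            ε = min ((min (η*δ) g)/(2*(c*K^N+1))) (μ/(2*K^N)) := ⟨_, rfl⟩
        have hε0 : 0 < ε := by
          rw [hεdef]
          exact lt_min (div_pos hX0 hden) (div_pos hμ0 (by linarith [hKN]))
        have hεX : ε*(c*K^N) ≤ (min (η*δ) g)/2 := by
          have h3 : ε ≤ (min (η*δ) g)/(2*(c*K^N+1)) := hεdef ▸ min_le_left _ _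
          have h5 : (0:ℝ) ≤ (min (η*δ) g)/(2*(c*K^N+1)) := (div_pos hX0 hden).le
          have hne1 : c*K^N+1 ≠ 0 := by linarith [hcKN]
          calc ε*(c*K^N) ≤ ((min (η*δ) g)/(2*(c*K^N+1)))*(c*K^N+1) :=
                mul_le_mul h3 (by linarith) hcKN h5
            _ = (min (η*δ) g)/2 := by field_simp
        refine ⟨ε, hε0, ?_, ?_, ?_⟩
        · intro k h1 h2
          have h3 : ε ≤ μ/(2*K^N) := hεdef ▸ min_le_right _ _
          have h4 : K^(N-k) ≤ K^N := pow_le_pow_right₀ hK1 (Nat.sub_le N k)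
          have h5 : μ ≤ d k := hμle k (Finset.mem_Icc.mpr ⟨h1, h2⟩)
          have h6 : (0:ℝ) ≤ μ/(2*K^N) := (div_pos hμ0 (by linarith [hKN])).le
          calc ε * K^(N-k) ≤ (μ/(2*K^N)) * K^N :=
                mul_le_mul h3 h4 (hKm _).le h6
            _ = μ/2 := by field_simp
            _ ≤ d k/2 := by linarith
        · exact le_trans hεX (by have := min_le_left (η*δ) g; linarith)
        · exact le_trans hεX (by have := min_le_right (η*δ) g; linarith)
    obtain ⟨ε, hε0, hεd, hεc1, hεc2⟩ := hεex
    obtain ⟨d', hd'def⟩ : ∃ d' : ℕ → ℝ, d' = fun k =>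
        if k = p then d p + δ else if p+1 ≤ k ∧ k ≤ N then d k - ε*K^(N-k) else d k :=
      ⟨_, rfl⟩
    have hd'p : d' p = d p + δ := by simp only [hd'def, if_pos rfl]
    have hd'tail : ∀ k, p+1 ≤ k → k ≤ N → d' k = d k - ε*K^(N-k) := by
      intro k h1 h2
      have hne : k ≠ p := by omega
      simp only [hd'def]
      rw [if_neg hne, if_pos ⟨h1, h2⟩]
    have hd'other : ∀ k, k ≠ p → ¬(p+1 ≤ k ∧ k ≤ N) → d' k = d k := by
      intro k h1 h2
      simp only [hd'def]
      rw [if_neg h1, if_neg h2]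
    have hdk0 : ∀ k, p+1 ≤ k → k ≤ N → 0 < d k := fun k h1 h2 => hd k (by omega) h2
    -- admissibility
    have hd'1 : 0 ≤ d' 1 := by
      rcases eq_or_ne (1:ℕ) p with h | h
      · rw [← h] at hd'p; rw [hd'p]; linarith
      · rw [hd'other 1 h (by omega)]; exact hd1
    have hd'pos : ∀ k, 2 ≤ k → k ≤ N → 0 < d' k := by
      intro k h2 hkN
      rcases eq_or_ne k p with h | h
      · rw [h, hd'p]; linarith
      · by_cases h3 : p+1 ≤ k ∧ k ≤ N
        · rw [hd'tail k h3.1 h3.2]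
          have := hεd k h3.1 h3.2
          have := hd k h2 hkN
          linarith
        · rw [hd'other k h h3]; exact hd k h2 hkN
    -- error terms
    obtain ⟨r, hrdef⟩ : ∃ r : ℕ → ℝ, r = fun k =>
        if p+1 ≤ k ∧ k ≤ N then ε*K^(N-k)*(2/(d k)^2) else 0 := ⟨_, rfl⟩
    have hr0 : ∀ k, 0 ≤ r k := by
      intro k
      simp only [hrdef]
      split
      · have h1 : (0:ℝ) ≤ 2/(d k)^2 := by positivity
        exact mul_nonneg (mul_nonneg hε0.le (hKm _).le) h1
      · exact le_refl 0
    have hrk : ∀ k, k ≠ p → k ≤ N → lam^k/d' k ≤ lam^k/d k + r k := by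
      intro k hkp hkN
      by_cases h3 : p+1 ≤ k
      · have hdk : 0 < d k := hdk0 k h3 hkN
        have he0 : 0 < ε*K^(N-k) := mul_pos hε0 (hKm _)
        have he : ε*K^(N-k) ≤ d k/2 := hεd k h3 hkN
        rw [hd'tail k h3 hkN]
        have hrr : r k = ε*K^(N-k)*(2/(d k)^2) := by
          simp only [hrdef]; rw [if_pos ⟨h3, hkN⟩]
        rw [hrr]
        have hlk1 : lam^k ≤ 1 := pow_le_one₀ hlam0.le hlam1.le
        have hlk0 : 0 < lam^k := pow_pos hlam0 k
        have hdk2 : (0:ℝ) < (d k)^2 := pow_pos hdk 2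
        have h1 : 1/(d k - ε*K^(N-k)) ≤ 1/(d k) + 2*(ε*K^(N-k))/(d k)^2 := by
          rw [div_add_div _ _ (ne_of_gt hdk) (ne_of_gt hdk2),
            div_le_div_iff₀ (by linarith) (mul_pos hdk hdk2)]
          have hfact : 0 ≤ d k * (ε*K^(N-k)) * (d k - 2*(ε*K^(N-k))) :=
            mul_nonneg (mul_nonneg hdk.le he0.le) (by linarith)
          linarith [hfact]
        have h2 : lam^k * (2*(ε*K^(N-k))/(d k)^2) ≤ 1 * (2*(ε*K^(N-k))/(d k)^2) := by
          apply mul_le_mul_of_nonneg_right hlk1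
          exact div_nonneg (by linarith) hdk2.le
        calc lam^k/(d k - ε*K^(N-k)) = lam^k * (1/(d k - ε*K^(N-k))) := by ring
          _ ≤ lam^k * (1/(d k) + 2*(ε*K^(N-k))/(d k)^2) :=
              mul_le_mul_of_nonneg_left h1 hlk0.le
          _ = lam^k/(d k) + lam^k * (2*(ε*K^(N-k))/(d k)^2) := by ring
          _ ≤ lam^k/(d k) + ε*K^(N-k)*(2/(d k)^2) := by
              have heq : (1:ℝ) * (2*(ε*K^(N-k))/(d k)^2) = ε*K^(N-k)*(2/(d k)^2) := by
                ring
              linarith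
      · have h4 : ¬(p+1 ≤ k ∧ k ≤ N) := by omega
        rw [hd'other k hkp h4]
        have hrr : r k = 0 := by simp only [hrdef]; rw [if_neg h4]
        rw [hrr, add_zero]
    obtain ⟨E, hEdef⟩ : ∃ E : ℝ, E = ∑ k ∈ Finset.Icc (p+1) N, r k := ⟨_, rfl⟩
    have hE0 : 0 ≤ E := hEdef ▸ Finset.sum_nonneg (fun k _ => hr0 k)
    have hEub : E ≤ ε*(c*K^N) := by
      have h1 : ∑ k ∈ Finset.Icc (p+1) N, r k
          ≤ ∑ k ∈ Finset.Icc (p+1) N, ε*K^N*(2/(d k)^2) := by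
        apply Finset.sum_le_sum
        intro k hk
        obtain ⟨hk1, hk2⟩ := Finset.mem_Icc.mp hk
        have hrr : r k = ε*K^(N-k)*(2/(d k)^2) := by
          simp only [hrdef]; rw [if_pos ⟨hk1, hk2⟩]
        rw [hrr]
        have h4 : K^(N-k) ≤ K^N := pow_le_pow_right₀ hK1 (Nat.sub_le N k)
        have h5 : (0:ℝ) ≤ 2/(d k)^2 := by positivity
        exact mul_le_mul_of_nonneg_right
          (mul_le_mul_of_nonneg_left h4 hε0.le) h5
      have h2 : ∑ k ∈ Finset.Icc (p+1) N, ε*K^N*(2/(d k)^2) = ε*K^N*c := by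
        rw [hcdef, Finset.mul_sum]
      rw [hEdef]
      calc ∑ k ∈ Finset.Icc (p+1) N, r k ≤ ε*K^N*c := by rw [← h2]; exact h1
        _ = ε*(c*K^N) := by ring
    have hEηδ : E ≤ η*δ/2 := le_trans hEub hεc1
    have hEg : E ≤ g/2 := le_trans hEub hεc2
    have hrsupp : ∀ s : Finset ℕ, Finset.Icc (p+1) N ⊆ s → (∀ x ∈ s, x ≤ N) →
        ∑ k ∈ s, r k = E := by
      intro s hs hsN
      rw [hEdef]
      refine (Finset.sum_subset hs ?_).symm
      intro x hx hnx
      have hxN := hsN x hx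
      have hcond : ¬(p+1 ≤ x ∧ x ≤ N) := by
        intro hcc
        exact hnx (Finset.mem_Icc.mpr hcc)
      simp only [hrdef]; rw [if_neg hcond]
    have hrtail : ∀ i, p ≤ i → ∑ k ∈ Finset.Icc (i+1) N, r k ≤ ε * K^(N-i-1) * c := by
      intro i hpi
      have h1 : ∑ k ∈ Finset.Icc (i+1) N, r k
          ≤ ∑ k ∈ Finset.Icc (i+1) N, ε*K^(N-i-1)*(2/(d k)^2) := by
        apply Finset.sum_le_sum
        intro k hk
        obtain ⟨hk1, hk2⟩ := Finset.mem_Icc.mp hk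
        have hrr : r k = ε*K^(N-k)*(2/(d k)^2) := by
          simp only [hrdef]; rw [if_pos ⟨by omega, hk2⟩]
        rw [hrr]
        have h4 : K^(N-k) ≤ K^(N-i-1) := pow_le_pow_right₀ hK1 (by omega)
        have h5 : (0:ℝ) ≤ 2/(d k)^2 := by positivity
        exact mul_le_mul_of_nonneg_right
          (mul_le_mul_of_nonneg_left h4 hε0.le) h5
      have h2 : ∑ k ∈ Finset.Icc (i+1) N, ε*K^(N-i-1)*(2/(d k)^2)
          = ε*K^(N-i-1) * ∑ k ∈ Finset.Icc (i+1) N, 2/(d k)^2 := by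
        rw [Finset.mul_sum]
      have h3 : ∑ k ∈ Finset.Icc (i+1) N, 2/(d k)^2 ≤ c := by
        rw [hcdef]
        apply Finset.sum_le_sum_of_subset_of_nonneg
          (Finset.Icc_subset_Icc (by omega) le_rfl)
        intro k _ _
        positivity
      calc ∑ k ∈ Finset.Icc (i+1) N, r k
          ≤ ε*K^(N-i-1) * ∑ k ∈ Finset.Icc (i+1) N, 2/(d k)^2 := by rw [← h2]; exact h1
        _ ≤ ε*K^(N-i-1) * c :=
            mul_le_mul_of_nonneg_left h3 (mul_nonneg hε0.le (hKm _).le)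
        _ = ε * K^(N-i-1) * c := by ring
    -- main pointwise bound
    have hmain : ∀ i ∈ Finset.Icc 1 N, phiTilde lam η N d' i < M := by
      intro i hi
      obtain ⟨hi1, hiN⟩ := Finset.mem_Icc.mp hi
      have hφi : phiTilde lam η N d i ≤ M := hle i hi
      rcases lt_trichotomy i p with hip | hip | hip
      -- Case A : i < p
      · have hp2 : 2 ≤ p := by omega
        have hdp : 0 < d p := hd p hp2 hpN
        have hpmem : p ∈ Finset.Icc (i+1) N := Finset.mem_Icc.mpr ⟨by omega, hpN⟩
        have hd'i : d' i = d i := hd'other i (by omega) (by omega)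
        have hsplit : ∑ k ∈ Finset.Icc (i+1) N, lam^k/d' k
            = lam^p/d' p + ∑ k ∈ (Finset.Icc (i+1) N).erase p, lam^k/d' k :=
          (Finset.add_sum_erase _ _ hpmem).symm
        have hsplit2 : ∑ k ∈ Finset.Icc (i+1) N, lam^k/d k
            = lam^p/d p + ∑ k ∈ (Finset.Icc (i+1) N).erase p, lam^k/d k :=
          (Finset.add_sum_erase _ _ hpmem).symm
        have hEer : ∑ k ∈ (Finset.Icc (i+1) N).erase p, r k = E := by
          apply hrsupp
          · intro x hx
            obtain ⟨hx1, hx2⟩ := Finset.mem_Icc.mp hx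
            exact Finset.mem_erase.mpr ⟨by omega, Finset.mem_Icc.mpr ⟨by omega, hx2⟩⟩
          · intro x hx
            exact (Finset.mem_Icc.mp (Finset.mem_erase.mp hx).2).2
        have herase : ∑ k ∈ (Finset.Icc (i+1) N).erase p, lam^k/d' k
            ≤ ∑ k ∈ (Finset.Icc (i+1) N).erase p, lam^k/d k + E := by
          rw [← hEer, ← Finset.sum_add_distrib]
          apply Finset.sum_le_sum
          intro k hk
          obtain ⟨hk1, hk2⟩ := Finset.mem_erase.mp hk
          exact hrk k hk1 (Finset.mem_Icc.mp hk2).2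
        have hgain : g ≤ (1-lam)*(lam^p/d p - lam^p/(d p + δ)) := by
          have hpp : 0 < lam^p := pow_pos hlam0 p
          have hdpδ : 0 < d p * (d p + δ) := mul_pos hdp (by linarith)
          have h1 : lam^p/d p - lam^p/(d p + δ) = lam^p*δ/(d p*(d p+δ)) := by
            field_simp
            ring
          have h2 : lam^p*δ/(d p*(d p+δ)+1) ≤ lam^p*δ/(d p*(d p+δ)) := by
            apply div_le_div_of_nonneg_left (mul_nonneg hpp.le hδ0.le) hdpδ
            linarith
          calc g = (1-lam)*(lam^p*δ/(d p*(d p+δ)+1)) := by rw [hgdef]; ring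
            _ ≤ (1-lam)*(lam^p*δ/(d p*(d p+δ))) :=
                mul_le_mul_of_nonneg_left h2 honelam.le
            _ = (1-lam)*(lam^p/d p - lam^p/(d p + δ)) := by rw [h1]
        have hE' : (1-lam)*E ≤ E := by linarith [mul_nonneg hlam0.le hE0]
        have hφieq : phiTilde lam η N d i
            = (1-lam)*(lam^p/d p + ∑ k ∈ (Finset.Icc (i+1) N).erase p, lam^k/d k)
              + η*d i := by
          simp only [phiTilde]; rw [hsplit2]
        simp only [phiTilde]
        rw [hd'i, hsplit, hd'p]
        rw [hφieq] at hφi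
        have hstep : (1-lam)*(lam^p/(d p + δ)
              + ∑ k ∈ (Finset.Icc (i+1) N).erase p, lam^k/d' k)
            ≤ (1-lam)*(lam^p/(d p + δ)
              + (∑ k ∈ (Finset.Icc (i+1) N).erase p, lam^k/d k + E)) :=
          mul_le_mul_of_nonneg_left (add_le_add le_rfl herase) honelam.le
        linarith [hEg, hg0, hgain, hE', hstep, hφi]
      -- Case B : i = p
      · subst hip
        have hsum' : ∑ k ∈ Finset.Icc (i+1) N, lam^k/d' k
            ≤ ∑ k ∈ Finset.Icc (i+1) N, lam^k/d k + E := by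
          rw [hEdef, ← Finset.sum_add_distrib]
          apply Finset.sum_le_sum
          intro k hk
          obtain ⟨hk1, hk2⟩ := Finset.mem_Icc.mp hk
          exact hrk k (by omega) hk2
        simp only [phiTilde]
        rw [hd'p]
        have hstep := mul_le_mul_of_nonneg_left hsum' honelam.le
        have hE' : (1-lam)*E ≤ E := by linarith [mul_nonneg hlam0.le hE0]
        simp only [phiTilde] at hcon hM2
        linarith [hM2, mul_pos hη hδ0, hEηδ, hstep, hE']
      -- Case C : p < i
      · rcases eq_or_lt_of_le hiN with hiN' | hiN'
        · -- i = N
          subst hiN'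
          have hempty : Finset.Icc (i+1) i = (∅ : Finset ℕ) := Finset.Icc_eq_empty (by omega)
          have hd'N : d' i = d i - ε*K^(i-i) := hd'tail i (by omega) le_rfl
          rw [show i-i = 0 from by omega, pow_zero, mul_one] at hd'N
          simp only [phiTilde, hempty, Finset.sum_empty, mul_zero, zero_add] at hφi ⊢
          rw [hd'N]
          linarith [mul_pos hη hε0]
        · -- p < i < N
          have hd'i : d' i = d i - ε*K^(N-i) := hd'tail i (by omega) hiN
          have hsum' : ∑ k ∈ Finset.Icc (i+1) N, lam^k/d' k
              ≤ ∑ k ∈ Finset.Icc (i+1) N, lam^k/d k + ∑ k ∈ Finset.Icc (i+1) N, r k := by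
            rw [← Finset.sum_add_distrib]
            apply Finset.sum_le_sum
            intro k hk
            obtain ⟨hk1, hk2⟩ := Finset.mem_Icc.mp hk
            exact hrk k (by omega) hk2
          have htail := hrtail i hip.le
          have hKpow : K^(N-i-1)*K = K^(N-i) := by
            rw [← pow_succ]
            congr 1
            omega
          have hr0' : 0 ≤ ∑ k ∈ Finset.Icc (i+1) N, r k :=
            Finset.sum_nonneg (fun k _ => hr0 k)
          have h2 : ε*K^(N-i-1)*c ≤ η/2*(ε*K^(N-i)) := by
            have h21 : ε*K^(N-i-1)*c ≤ ε*K^(N-i-1)*(η*K/2) :=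
              mul_le_mul_of_nonneg_left (by linarith) (mul_nonneg hε0.le (hKm _).le)
            have h22 : ε*K^(N-i-1)*(η*K/2) = η/2*(ε*K^(N-i)) := by
              rw [← hKpow]; ring
            linarith
          have hstep := mul_le_mul_of_nonneg_left hsum' honelam.le
          have hE' : (1-lam)*(∑ k ∈ Finset.Icc (i+1) N, r k)
              ≤ ∑ k ∈ Finset.Icc (i+1) N, r k := by
            linarith [mul_nonneg hlam0.le hr0']
          have hKpos : 0 < ε*K^(N-i) := mul_pos hε0 (hKm _)
          simp only [phiTilde] at hφi ⊢
          rw [hd'i]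
          linarith [hstep, hE', htail, h2, hφi, mul_pos hη hKpos]
    have hsup' : (Finset.Icc 1 N).sup' (Finset.nonempty_Icc.mpr (by omega))
        (phiTilde lam η N d') < M := by
      rw [Finset.sup'_lt_iff]
      exact hmain
    exact absurd (hmin' d' hd'1 hd'pos) (not_le.mpr hsup')
  intro i hi j hj
  rw [key i hi, key j hj]
end

section
/- Let λ ∈ (0,1) and let (e_n)_{n ≥ 1} be the sequence of reals defined by e_1 = 0 and e_{k+1} = ( e_k + √(e_k² + 4(1−λ)λ^{k+1}) )/2 for k ≥ 1. Set X_n = Σ_{k=1}^{n} (1−λ)λ^k. Then for all n ≥ 1: e_n < √(2X_n) and e_{n+1} − e_n > √(2X_{n+2}) − √(2X_{n+1}). -/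
/-- For `λ ∈ (0,1)`, the sequence `e_1 = 0`,
`e_{k+1} = (e_k + √(e_k² + 4(1-λ)λ^{k+1}))/2` satisfies, with
`X_n = Σ_{k=1}^{n} (1-λ)λ^k`: `e_n < √(2 X_n)` and
`e_{n+1} - e_n > √(2 X_{n+2}) - √(2 X_{n+1})` for all `n ≥ 1`. -/
theorem stmt19 (lam : ℝ) (hlam : lam ∈ Set.Ioo (0:ℝ) 1)
    (e : ℕ → ℝ) (he1 : e 1 = 0)
    (hrec : ∀ k : ℕ, 1 ≤ k →
      e (k + 1) = (e k + Real.sqrt ((e k) ^ 2 + 4 * (1 - lam) * lam ^ (k + 1))) / 2)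
    (X : ℕ → ℝ) (hX : ∀ n : ℕ, X n = ∑ k ∈ Finset.Icc 1 n, (1 - lam) * lam ^ k) :
    ∀ n : ℕ, 1 ≤ n →
      e n < Real.sqrt (2 * X n) ∧
      e (n + 1) - e n > Real.sqrt (2 * X (n + 2)) - Real.sqrt (2 * X (n + 1)) := by
  obtain ⟨hl0, hl1⟩ := hlam
  have hδpos : ∀ k : ℕ, 0 < (1 - lam) * lam ^ k := fun k =>
    mul_pos (by linarith) (pow_pos hl0 k)
  have hXstep : ∀ n : ℕ, 1 ≤ n → X (n + 1) = X n + (1 - lam) * lam ^ (n + 1) := by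
    intro n hn
    rw [hX, hX, Finset.sum_Icc_succ_top (by omega : 1 ≤ n + 1)]
  have hXpos : ∀ n : ℕ, 1 ≤ n → 0 < X n := by
    intro n hn
    rw [hX]
    apply Finset.sum_pos (fun k _ => hδpos k)
    exact ⟨1, Finset.mem_Icc.mpr ⟨le_refl 1, hn⟩⟩
  -- basic facts about the recurrence
  have hsq : ∀ k : ℕ, 1 ≤ k →
      (Real.sqrt ((e k) ^ 2 + 4 * (1 - lam) * lam ^ (k + 1))) ^ 2
        = (e k) ^ 2 + 4 * (1 - lam) * lam ^ (k + 1) := by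
    intro k hk
    apply Real.sq_sqrt
    nlinarith [hδpos (k + 1), sq_nonneg (e k)]
  have hepos : ∀ k : ℕ, 1 ≤ k → 0 < e (k + 1) := by
    intro k hk
    rw [hrec k hk]
    have h1 : |e k| < Real.sqrt ((e k) ^ 2 + 4 * (1 - lam) * lam ^ (k + 1)) := by
      rw [← Real.sqrt_sq_eq_abs]
      apply Real.sqrt_lt_sqrt (sq_nonneg _)
      nlinarith [hδpos (k + 1)]
    have h2 := neg_abs_le (e k)
    linarith
  have hkey : ∀ k : ℕ, 1 ≤ k →
      e (k + 1) * (e (k + 1) - e k) = (1 - lam) * lam ^ (k + 1) := by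
    intro k hk
    have hr := hrec k hk
    have h2 := hsq k hk
    rw [hr]
    nlinarith [h2]
  -- main induction: e n < √(2 X n)
  have main : ∀ n : ℕ, 1 ≤ n → e n < Real.sqrt (2 * X n) := by
    intro n hn
    induction n, hn using Nat.le_induction with
    | base =>
      rw [he1]
      exact Real.sqrt_pos.mpr (by linarith [hXpos 1 le_rfl])
    | succ n hn ih =>
      set s := Real.sqrt (2 * X (n + 1)) with hs
      have hXp : 0 < X (n + 1) := hXpos (n + 1) (by omega)
      have hs2 : s ^ 2 = 2 * X (n + 1) := Real.sq_sqrt (by linarith)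
      have hspos : 0 < s := Real.sqrt_pos.mpr (by linarith)
      have hsn2 : (Real.sqrt (2 * X n)) ^ 2 = 2 * X n :=
        Real.sq_sqrt (by linarith [hXpos n hn])
      -- AM-GM: √(2Xn) * s ≤ X n + X (n+1)
      have hamgm : Real.sqrt (2 * X n) * s ≤ X n + X (n + 1) := by
        nlinarith [sq_nonneg (Real.sqrt (2 * X n) - s)]
      have hXs := hXstep n hn
      -- s * (s - e n) > δ(n+1)
      have hf : (1 - lam) * lam ^ (n + 1) < s * (s - e n) := by
        have h1 : s * e n < s * Real.sqrt (2 * X n) := by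
          exact mul_lt_mul_of_pos_left ih hspos
        nlinarith [hamgm]
      have hkn := hkey n hn
      have hep := hepos n hn
      by_contra h
      push_neg at h
      -- s ≤ e (n+1)
      have hsen : e n < s := by nlinarith [hδpos (n + 1)]
      nlinarith [mul_nonneg (sub_nonneg.mpr h) (by linarith : (0:ℝ) ≤ e (n + 1) + s - e n)]
  -- now conclude
  intro n hn
  refine ⟨main n hn, ?_⟩
  have h1 := main (n + 1) (by omega)
  have hep := hepos n hn
  have hkn := hkey n hn
  set t1 := Real.sqrt (2 * X (n + 1)) with ht1
  set t2 := Real.sqrt (2 * X (n + 2)) with ht2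
  have hX1 : 0 < X (n + 1) := hXpos (n + 1) (by omega)
  have hX2 : 0 < X (n + 2) := hXpos (n + 2) (by omega)
  have ht1pos : 0 < t1 := Real.sqrt_pos.mpr (by linarith)
  have ht12 : t1 < t2 := by
    apply Real.sqrt_lt_sqrt (by linarith)
    have := hXstep (n + 1) (by omega)
    have := hδpos (n + 2)
    linarith
  have ht1sq : t1 ^ 2 = 2 * X (n + 1) := Real.sq_sqrt (by linarith)
  have ht2sq : t2 ^ 2 = 2 * X (n + 2) := Real.sq_sqrt (by linarith)
  have hXs2 := hXstep (n + 1) (by omega)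
  -- B : t2 - t1 < δ(n+2)/t1
  have hB : t2 - t1 < (1 - lam) * lam ^ (n + 2) / t1 := by
    rw [lt_div_iff₀ ht1pos]
    nlinarith [mul_pos (sub_pos.mpr ht12) (sub_pos.mpr ht12)]
  -- δ(n+2) < δ(n+1)
  have hδlt : (1 - lam) * lam ^ (n + 2) < (1 - lam) * lam ^ (n + 1) := by
    have := hδpos (n + 1)
    have : lam ^ (n + 2) < lam ^ (n + 1) :=
      pow_lt_pow_right_of_lt_one₀ hl0 hl1 (by omega)
    nlinarith [pow_pos hl0 (n + 1)]
  have hBB : (1 - lam) * lam ^ (n + 2) / t1 < (1 - lam) * lam ^ (n + 1) / t1 := by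
    gcongr
  -- A : δ(n+1)/t1 < e (n+1) - e n
  have hA : (1 - lam) * lam ^ (n + 1) / t1 < e (n + 1) - e n := by
    rw [div_lt_iff₀ ht1pos]
    calc (1 - lam) * lam ^ (n + 1) = e (n + 1) * (e (n + 1) - e n) := hkn.symm
    _ < (e (n + 1) - e n) * t1 := by
        have hpos : 0 < e (n + 1) - e n := by nlinarith [hδpos (n + 1)]
        nlinarith
  linarith
end
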